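/- arXiv:2304.01932 — 7 statements merged into one kernel-verified Lean document; each statement's English description precedes it below -/
import Mathlib

section
/- With f₁, f₂ as above and 0 < λ < 2√3 − 3, let U := B_R(T₀) be the open ball of radius R = λ/(1−λ) centered at T₀ = (1,0). Then f₁(U) ∪ f₂(U) ⊂ U and f₁(U) ∩ f₂(U) = ∅, i.e., the iterated function system {f₁, f₂} satisfies the open set condition with open set U. -/
open Complex Metric

/-- The contracting similarity f_j(z) = 1 + λ e^{(−1)^j iπ/3} z of ℂ. -/
noncomputable def fmap (lam : ℝ) (j : ℕ) (z : ℂ) : ℂ :=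
  1 + (lam : ℂ) * Complex.exp ((-1 : ℂ) ^ j * Complex.I * (Real.pi / 3)) * z

lemma image_ball_aux (k : ℂ) (hk : k ≠ 0) (R : ℝ) :
    (fun z : ℂ => 1 + k * z) '' ball (1 : ℂ) R = ball (1 + k) (‖k‖ * R) := by
  ext w
  simp only [Set.mem_image, mem_ball, Complex.dist_eq]
  constructor
  · rintro ⟨z, hz, rfl⟩
    have he : 1 + k * z - (1 + k) = k * (z - 1) := by ring
    rw [he, norm_mul]
    exact mul_lt_mul_of_pos_left hz (norm_pos_iff.mpr hk)
  · intro hw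
    refine ⟨1 + (w - (1 + k)) / k, ?_, ?_⟩
    · have he : 1 + (w - (1 + k)) / k - 1 = (w - (1 + k)) / k := by ring
      rw [he, norm_div, div_lt_iff₀ (norm_pos_iff.mpr hk), mul_comm]
      exact hw
    · field_simp
      ring

/-- Open set condition: for 0 < λ < 2√3 − 3, with U = B_{λ/(1−λ)}(1) one has
f₁(U) ∪ f₂(U) ⊂ U and f₁(U) ∩ f₂(U) = ∅. -/
theorem open_set_condition (lam : ℝ) (h0 : 0 < lam) (h1 : lam < 2 * Real.sqrt 3 - 3) :
    (fmap lam 1 '' ball (1 : ℂ) (lam / (1 - lam)) ∪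
        fmap lam 2 '' ball (1 : ℂ) (lam / (1 - lam)) ⊆ ball (1 : ℂ) (lam / (1 - lam))) ∧
      fmap lam 1 '' ball (1 : ℂ) (lam / (1 - lam)) ∩
        fmap lam 2 '' ball (1 : ℂ) (lam / (1 - lam)) = ∅ := by
  have hs3 : Real.sqrt 3 ^ 2 = 3 := Real.sq_sqrt (by norm_num)
  have hs3pos : 0 < Real.sqrt 3 := Real.sqrt_pos.2 (by norm_num)
  have hs3lt : Real.sqrt 3 < 2 := by nlinarith
  have hlam1 : lam < 1 := by nlinarith
  set R := lam / (1 - lam) with hR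
  have hRpos : 0 < R := div_pos h0 (by linarith)
  have hne : (1 : ℝ) - lam ≠ 0 := by linarith
  have hreq : lam * R + lam = R := by
    rw [hR]
    field_simp
    ring
  set k : ℕ → ℂ := fun j => (lam : ℂ) * Complex.exp ((-1 : ℂ) ^ j * Complex.I * (Real.pi / 3)) with hk
  have habs : ∀ j, ‖k j‖ = lam := by
    intro j
    have hre : (((-1 : ℂ) ^ j * Complex.I * (Real.pi / 3))).re = 0 := by
      rcases Nat.even_or_odd j with h | h
      · rw [h.neg_one_pow]; simp
      · rw [h.neg_one_pow]; simp
    rw [hk]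
    simp only [norm_mul, Complex.norm_real, Real.norm_eq_abs, Complex.norm_exp, hre, Real.exp_zero,
      abs_of_pos h0, mul_one]
  have hkne : ∀ j, k j ≠ 0 := by
    intro j h
    have := habs j
    rw [h, norm_zero] at this
    exact h0.ne' this.symm
  have himg : ∀ j, fmap lam j '' ball (1 : ℂ) R = ball (1 + k j) (lam * R) := by
    intro j
    have : fmap lam j = fun z : ℂ => 1 + k j * z := by
      funext z; simp [fmap, hk, mul_assoc]
    rw [this, image_ball_aux (k j) (hkne j), habs]
  have hsub : ∀ j, ball (1 + k j) (lam * R) ⊆ ball (1 : ℂ) R := by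
    intro j
    apply ball_subset_ball'
    have : dist (1 + k j) (1 : ℂ) = lam := by
      rw [Complex.dist_eq]
      simpa using habs j
    rw [this]
    linarith [hreq]
  -- distance between centers
  have e1 : (-1 : ℂ) ^ 1 * Complex.I * (Real.pi / 3) = ((-(Real.pi / 3) : ℝ) : ℂ) * Complex.I := by
    push_cast; ring
  have e2 : (-1 : ℂ) ^ 2 * Complex.I * (Real.pi / 3) = (((Real.pi / 3) : ℝ) : ℂ) * Complex.I := by
    push_cast; ring
  have hdiff : k 1 - k 2 = ((-(lam * Real.sqrt 3) : ℝ) : ℂ) * Complex.I := by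
    rw [hk]
    simp only [e1, e2, Complex.exp_mul_I, ← Complex.ofReal_cos, ← Complex.ofReal_sin,
      Real.cos_neg, Real.sin_neg, Real.sin_pi_div_three]
    push_cast
    ring
  have hdist : dist (1 + k 1) (1 + k 2) = lam * Real.sqrt 3 := by
    rw [dist_add_left, Complex.dist_eq, hdiff]
    rw [norm_mul, Complex.norm_real, Real.norm_eq_abs, Complex.norm_I, mul_one, abs_neg,
      abs_of_pos (mul_pos h0 hs3pos)]
  have hsep : lam * R + lam * R ≤ dist (1 + k 1) (1 + k 2) := by
    rw [hdist]
    have h2R : 2 * R ≤ Real.sqrt 3 := by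
      rw [hR, show (2:ℝ) * (lam / (1 - lam)) = 2 * lam / (1 - lam) by ring,
        div_le_iff₀ (by linarith : (0:ℝ) < 1 - lam)]
      nlinarith
    nlinarith
  refine ⟨Set.union_subset ?_ ?_, ?_⟩
  · rw [himg 1]; exact hsub 1
  · rw [himg 2]; exact hsub 2
  · rw [himg 1, himg 2, ← Set.disjoint_iff_inter_eq_empty]
    exact ball_disjoint_ball hsep
end

section
/- With f₁, f₂ as above and 0 < λ < 2√3 − 3, the attractor A is totally disconnected. -/
open Complex

lemma exp_abs_one (j : ℕ) : ‖(Complex.exp ((-1 : ℂ) ^ j * Complex.I * (Real.pi / 3)))‖ = 1 := by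
  rw [Complex.norm_exp]
  have : ((-1 : ℂ) ^ j * Complex.I * (Real.pi / 3)).re = 0 := by
    rcases Nat.even_or_odd j with h | h
    · simp [h.neg_one_pow]
    · simp [h.neg_one_pow]
  rw [this, Real.exp_zero]

lemma exp1val : Complex.exp ((-1 : ℂ) ^ 1 * Complex.I * (Real.pi / 3)) =
    1/2 - (Real.sqrt 3)/2 * Complex.I := by
  have h : ((-1 : ℂ) ^ 1 * Complex.I * (Real.pi / 3)) = ((-(Real.pi/3) : ℝ) : ℂ) * Complex.I := by
    push_cast; ring
  rw [h, Complex.exp_mul_I, ← Complex.ofReal_cos, ← Complex.ofReal_sin,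
    Real.cos_neg, Real.sin_neg, Real.cos_pi_div_three, Real.sin_pi_div_three]
  push_cast; ring

lemma exp2val : Complex.exp ((-1 : ℂ) ^ 2 * Complex.I * (Real.pi / 3)) =
    1/2 + (Real.sqrt 3)/2 * Complex.I := by
  have h : ((-1 : ℂ) ^ 2 * Complex.I * (Real.pi / 3)) = (((Real.pi/3) : ℝ) : ℂ) * Complex.I := by
    push_cast; ring
  rw [h, Complex.exp_mul_I, ← Complex.ofReal_cos, ← Complex.ofReal_sin,
    Real.cos_pi_div_three, Real.sin_pi_div_three]
  push_cast; ring

lemma dist_fmap (lam : ℝ) (h0 : 0 ≤ lam) (j : ℕ) (z w : ℂ) :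
    dist (fmap lam j z) (fmap lam j w) = lam * dist z w := by
  simp only [fmap, Complex.dist_eq]
  rw [show (1 : ℂ) + (lam : ℂ) * Complex.exp ((-1 : ℂ) ^ j * Complex.I * (Real.pi / 3)) * z -
      (1 + (lam : ℂ) * Complex.exp ((-1 : ℂ) ^ j * Complex.I * (Real.pi / 3)) * w) =
      (lam : ℂ) * Complex.exp ((-1 : ℂ) ^ j * Complex.I * (Real.pi / 3)) * (z - w) by ring]
  rw [norm_mul, norm_mul, exp_abs_one, Complex.norm_real, Real.norm_eq_abs, _root_.abs_of_nonneg h0]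
  ring

lemma continuous_fmap (lam : ℝ) (j : ℕ) : Continuous (fmap lam j) := by
  unfold fmap; fun_prop

/-- For 0 < λ < 2√3 − 3, the attractor A of {f₁, f₂} is totally disconnected. -/
theorem attractor_totallyDisconnected (lam : ℝ) (h0 : 0 < lam)
    (h1 : lam < 2 * Real.sqrt 3 - 3)
    (A : Set ℂ) (hne : A.Nonempty) (hcpt : IsCompact A)
    (hA : A = fmap lam 1 '' A ∪ fmap lam 2 '' A) :
    IsTotallyDisconnected A := by
  have hs3 : Real.sqrt 3 < 7/4 := by
    rw [show (7:ℝ)/4 = Real.sqrt ((7/4)^2) by rw [Real.sqrt_sq]; norm_num]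
    exact Real.sqrt_lt_sqrt (by norm_num) (by norm_num)
  have hs3' : (1:ℝ) < Real.sqrt 3 := by
    nlinarith [Real.sq_sqrt (by norm_num : (3:ℝ) ≥ 0), Real.sqrt_nonneg 3]
  have hhalf : lam < 1/2 := by linarith
  have hlam1 : lam < 1 := by linarith
  set c : ℝ := 2 / (2 - lam) with hc_def
  have hc : 0 < c := by rw [hc_def]; exact div_pos (by norm_num) (by linarith)
  set r : ℝ := Real.sqrt 3 * lam * c / (2 * (1 - lam)) with hr_def
  have hsq3 : (0:ℝ) < Real.sqrt 3 := by linarith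
  have h2l : (2:ℝ) - lam ≠ 0 := by nlinarith
  have h1l : (1:ℝ) - lam ≠ 0 := by nlinarith
  have hr0 : 0 < r := by
    apply div_pos (mul_pos (mul_pos hsq3 h0) hc) (by nlinarith)
  -- distance from f_j(c) to c, j = 1, 2
  have hfc : ∀ j, j = 1 ∨ j = 2 → dist (fmap lam j (c : ℂ)) (c : ℂ) = (1 - lam) * r := by
    have hcc : (1 : ℂ) - (c:ℂ) + (lam:ℂ) * (c:ℂ) / 2 = 0 := by
      have : (1 : ℝ) - c + lam * c / 2 = 0 := by
        rw [hc_def]; field_simp; ring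
      exact_mod_cast this
    have hval : (1 - lam) * r = Real.sqrt 3 * lam * c / 2 := by
      rw [hr_def]; field_simp
    intro j hj
    rcases hj with h | h <;> subst h <;>
      rw [Complex.dist_eq, hval]
    · rw [fmap, exp1val,
        show (1 : ℂ) + (lam:ℂ) * (1/2 - (Real.sqrt 3)/2 * Complex.I) * (c:ℂ) - (c:ℂ)
          = ((-(Real.sqrt 3 * lam * c / 2) : ℝ) : ℂ) * Complex.I by
            push_cast; linear_combination hcc]
      rw [norm_mul, Complex.norm_I, Complex.norm_real, Real.norm_eq_abs, mul_one, abs_neg,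
        _root_.abs_of_nonneg (div_nonneg (mul_nonneg (mul_nonneg hsq3.le h0.le) hc.le) (by norm_num))]
    · rw [fmap, exp2val,
        show (1 : ℂ) + (lam:ℂ) * (1/2 + (Real.sqrt 3)/2 * Complex.I) * (c:ℂ) - (c:ℂ)
          = (((Real.sqrt 3 * lam * c / 2) : ℝ) : ℂ) * Complex.I by
            push_cast [] ; linear_combination hcc]
      rw [norm_mul, Complex.norm_I, Complex.norm_real, Real.norm_eq_abs, mul_one,
        _root_.abs_of_nonneg (div_nonneg (mul_nonneg (mul_nonneg hsq3.le h0.le) hc.le) (by norm_num))]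
  -- A is contained in the ball B(c, r)
  have hball : ∀ x ∈ A, dist x (c:ℂ) ≤ r := by
    obtain ⟨x₀, hx₀A, hmax⟩ := hcpt.exists_isMaxOn hne
      ((continuous_id.dist continuous_const).continuousOn)
    intro x hx
    have hb : dist x₀ (c:ℂ) ≤ r := by
      have hx₀' : x₀ ∈ fmap lam 1 '' A ∪ fmap lam 2 '' A := hA ▸ hx₀A
      have : ∃ j, (j = 1 ∨ j = 2) ∧ ∃ y ∈ A, x₀ = fmap lam j y := by
        rcases hx₀' with ⟨y, hy, hxy⟩ | ⟨y, hy, hxy⟩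
        exacts [⟨1, Or.inl rfl, y, hy, hxy.symm⟩, ⟨2, Or.inr rfl, y, hy, hxy.symm⟩]
      obtain ⟨j, hj, y, hyA, hxy⟩ := this
      have h1 : dist x₀ (c:ℂ) ≤ dist x₀ (fmap lam j (c:ℂ)) + dist (fmap lam j (c:ℂ)) (c:ℂ) :=
        dist_triangle _ _ _
      rw [hxy, dist_fmap lam h0.le, hfc j hj, ← hxy] at h1
      have h2 : dist y (c:ℂ) ≤ dist x₀ (c:ℂ) := hmax hyA
      nlinarith [h1, h2, mul_le_mul_of_nonneg_left h2 h0.le]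
    exact le_trans (hmax hx) hb
  -- the two pieces are disjoint
  have hdisjpt : ∀ x ∈ A, ∀ y ∈ A, fmap lam 1 x ≠ fmap lam 2 y := by
    intro x hx y hy heq
    set e1 := Complex.exp ((-1 : ℂ) ^ 1 * Complex.I * (Real.pi / 3)) with he1
    set e2 := Complex.exp ((-1 : ℂ) ^ 2 * Complex.I * (Real.pi / 3)) with he2
    have hxy : e1 * x = e2 * y := by
      have hl : (lam:ℂ) ≠ 0 := by exact_mod_cast h0.ne'
      apply mul_left_cancel₀ hl
      have h' := heq
      unfold fmap at h'
      rw [← he1, ← he2] at h'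
      linear_combination h'
    have hkey : e1 * (x - c) - e2 * (y - c) = (c:ℂ) * (e2 - e1) := by
      linear_combination hxy
    have habs : ‖((c:ℂ) * (e2 - e1))‖ ≤ 2 * r := by
      rw [← hkey]
      calc ‖(e1 * (x - c) - e2 * (y - c))‖
          ≤ ‖(e1 * (x - c))‖ + ‖(e2 * (y - c))‖ := by
            exact (norm_sub_le _ _)
        _ = ‖(x - c)‖ + ‖(y - c)‖ := by
            rw [norm_mul, norm_mul, he1, he2, exp_abs_one, exp_abs_one, one_mul, one_mul]
        _ ≤ r + r := by
            have h1 := hball x hx; have h2 := hball y hy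
            rw [Complex.dist_eq] at h1 h2; linarith
        _ = 2 * r := by ring
    have he12 : e2 - e1 = ((Real.sqrt 3 : ℝ) : ℂ) * Complex.I := by
      rw [he1, he2, exp1val, exp2val]; ring
    rw [he12, ← mul_assoc, norm_mul, Complex.norm_I, mul_one, ← Complex.ofReal_mul,
      Complex.norm_real, Real.norm_eq_abs, _root_.abs_of_nonneg (mul_nonneg hc.le hsq3.le)] at habs
    have h2r : r * (2 * (1 - lam)) = Real.sqrt 3 * lam * c := by
      rw [hr_def]; field_simp
    nlinarith [habs, h2r, mul_pos hsq3 hc, mul_le_mul_of_nonneg_right habs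
      (by linarith : (0:ℝ) ≤ 1 - lam)]
  -- bound on A
  obtain ⟨D, hD⟩ := Metric.isBounded_iff.mp hcpt.isBounded
  -- main induction
  have key : ∀ n : ℕ, ∀ t ⊆ A, IsPreconnected t → ∀ x ∈ t, ∀ y ∈ t, dist x y ≤ lam ^ n * D := by
    intro n
    induction n with
    | zero =>
      intro t ht hpc x hx y hy
      simpa using hD (ht hx) (ht hy)
    | succ n ih =>
      intro t ht hpc x hx y hy
      have hcl1 : IsCompact (fmap lam 1 '' A) := hcpt.image (continuous_fmap lam 1)
      have hcl2 : IsCompact (fmap lam 2 '' A) := hcpt.image (continuous_fmap lam 2)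
      have hdisj : Disjoint (fmap lam 1 '' A) (fmap lam 2 '' A) := by
        rw [Set.disjoint_left]
        rintro z ⟨a, ha, rfl⟩ ⟨b, hb, hz⟩
        exact hdisjpt a ha b hb hz.symm
      obtain ⟨U, V, hU, hV, hsubU, hsubV, hUV⟩ :=
        SeparatedNhds.of_isCompact_isCompact hcl1 hcl2 hdisj
      have htUV : t ⊆ U ∪ V := fun z hz => by
        have : z ∈ fmap lam 1 '' A ∪ fmap lam 2 '' A := hA ▸ ht hz
        rcases this with h | h
        exacts [Or.inl (hsubU h), Or.inr (hsubV h)]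
      have hcase : ∃ j, (j = 1 ∨ j = 2) ∧ t ⊆ fmap lam j '' A := by
        rcases hpc.subset_or_subset hU hV hUV htUV with hsub | hsub
        · refine ⟨1, Or.inl rfl, fun z hz => ?_⟩
          have hz' : z ∈ fmap lam 1 '' A ∪ fmap lam 2 '' A := hA ▸ ht hz
          rcases hz' with h | h
          · exact h
          · exact absurd (hsubV h) (fun hzV => hUV.ne_of_mem (hsub hz) hzV rfl)
        · refine ⟨2, Or.inr rfl, fun z hz => ?_⟩
          have hz' : z ∈ fmap lam 1 '' A ∪ fmap lam 2 '' A := hA ▸ ht hz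
          rcases hz' with h | h
          · exact absurd (hsubU h) (fun hzU => hUV.ne_of_mem hzU (hsub hz) rfl)
          · exact h
      obtain ⟨j, hj, hsub⟩ := hcase
      set a : ℂ := (lam : ℂ) * Complex.exp ((-1 : ℂ) ^ j * Complex.I * (Real.pi / 3)) with ha_def
      have ha0 : a ≠ 0 := by
        rw [ha_def]
        apply mul_ne_zero (by exact_mod_cast h0.ne') (Complex.exp_ne_zero _)
      set g : ℂ → ℂ := fun z => (z - 1) / a with hg_def
      have hfg : ∀ z, fmap lam j (g z) = z := by
        intro z; rw [fmap, hg_def, ← ha_def]; field_simp; ring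
      have hgf : ∀ z, g (fmap lam j z) = z := by
        intro z; rw [fmap, hg_def, ← ha_def]; field_simp; ring
      have hgc : Continuous g := by
        rw [hg_def]; exact (continuous_id.sub continuous_const).div_const a
      have hsA : g '' t ⊆ A := by
        rintro _ ⟨z, hz, rfl⟩
        obtain ⟨w, hw, rfl⟩ := hsub hz
        rwa [hgf]
      have hspc : IsPreconnected (g '' t) := hpc.image g hgc.continuousOn
      have hx' : g x ∈ g '' t := ⟨x, hx, rfl⟩
      have hy' : g y ∈ g '' t := ⟨y, hy, rfl⟩
      have := ih (g '' t) hsA hspc (g x) hx' (g y) hy'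
      calc dist x y = dist (fmap lam j (g x)) (fmap lam j (g y)) := by
            rw [hfg x, hfg y]
        _ = lam * dist (g x) (g y) := dist_fmap lam h0.le j _ _
        _ ≤ lam * (lam ^ n * D) := by
            exact mul_le_mul_of_nonneg_left this h0.le
        _ = lam ^ (n+1) * D := by ring
  -- conclusion
  intro t hts hpc x hx y hy
  have hlim : Filter.Tendsto (fun n : ℕ => lam ^ n * D) Filter.atTop (nhds 0) := by
    have := (tendsto_pow_atTop_nhds_zero_of_lt_one h0.le hlam1).mul_const D
    simpa using this
  have hle : dist x y ≤ 0 :=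
    ge_of_tendsto' hlim (fun n => key n t hts hpc x hx y hy)
  exact dist_le_zero.mp hle
end

section
/- Fix 0 < λ < 1/10 and let A be the attractor of the maps f_j(z) = 1 + λ e^{(−1)^j iπ/3} z (j = 1,2), and P := (1 + λ/2, 0). Then A is contained in the open ball B_λ(P). -/
open Complex Metric

lemma eabs (j : ℕ) : ‖Complex.exp ((-1 : ℂ) ^ j * Complex.I * (Real.pi / 3))‖ = 1 := by
  rw [Complex.norm_exp]
  have h : ((-1 : ℂ) ^ j) = (((-1 : ℝ) ^ j : ℝ) : ℂ) := by push_cast; ring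
  norm_num [Complex.mul_re, Complex.mul_im]
  exact (by rw [h]; exact Complex.ofReal_im _)

lemma eval1 : Complex.exp ((-1 : ℂ) ^ (1:ℕ) * Complex.I * (Real.pi / 3))
    = 1/2 - (Real.sqrt 3 / 2 : ℝ) * Complex.I := by
  have : ((-1 : ℂ) ^ (1:ℕ) * Complex.I * (Real.pi / 3)) = ((-(Real.pi/3) : ℝ) : ℂ) * Complex.I := by
    push_cast; ring
  rw [this, Complex.exp_mul_I, ← Complex.ofReal_cos, ← Complex.ofReal_sin,
    Real.cos_neg, Real.sin_neg, Real.cos_pi_div_three, Real.sin_pi_div_three]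
  push_cast; ring

lemma eval2 : Complex.exp ((-1 : ℂ) ^ (2:ℕ) * Complex.I * (Real.pi / 3))
    = 1/2 + (Real.sqrt 3 / 2 : ℝ) * Complex.I := by
  have : ((-1 : ℂ) ^ (2:ℕ) * Complex.I * (Real.pi / 3)) = (((Real.pi/3) : ℝ) : ℂ) * Complex.I := by
    push_cast; ring
  rw [this, Complex.exp_mul_I, ← Complex.ofReal_cos, ← Complex.ofReal_sin,
    Real.cos_pi_div_three, Real.sin_pi_div_three]
  push_cast; ring

lemma ehalf (j : ℕ) (hj : j = 1 ∨ j = 2) :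
    ‖Complex.exp ((-1 : ℂ) ^ j * Complex.I * (Real.pi / 3)) - 1/2‖
      = Real.sqrt 3 / 2 := by
  rcases hj with rfl | rfl
  · rw [eval1]
    have : ((1:ℂ)/2 - (Real.sqrt 3 / 2 : ℝ) * Complex.I - 1/2)
        = -((Real.sqrt 3 / 2 : ℝ) : ℂ) * Complex.I := by ring
    rw [this]
    simp [_root_.abs_of_nonneg (Real.sqrt_nonneg 3)]
  · rw [eval2]
    have : ((1:ℂ)/2 + (Real.sqrt 3 / 2 : ℝ) * Complex.I - 1/2)
        = ((Real.sqrt 3 / 2 : ℝ) : ℂ) * Complex.I := by ring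
    rw [this]
    simp [_root_.abs_of_nonneg (Real.sqrt_nonneg 3)]

/-- For 0 < λ < 1/10, the attractor A is contained in the open ball of radius λ
centered at P = (1 + λ/2, 0). -/
theorem attractor_subset_ball (lam : ℝ) (h0 : 0 < lam) (h1 : lam < 1 / 10)
    (A : Set ℂ) (hne : A.Nonempty) (hcpt : IsCompact A)
    (hA : A = fmap lam 1 '' A ∪ fmap lam 2 '' A) :
    A ⊆ ball (((1 + lam / 2 : ℝ) : ℂ)) lam := by

  set P : ℂ := ((1 + lam / 2 : ℝ) : ℂ) with hP
  have hcont : Continuous (fun z : ℂ => ‖z - P‖) :=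
    continuous_norm.comp (continuous_id.sub continuous_const)
  obtain ⟨z₀, hz₀, hmax⟩ := hcpt.exists_isMaxOn hne hcont.continuousOn
  have hub : ∀ z ∈ A, ‖z - P‖ ≤ ‖z₀ - P‖ := fun z hz => hmax hz
  have hstep : ∀ z ∈ A, ∃ j w, (j = 1 ∨ j = 2) ∧ w ∈ A ∧ z = fmap lam j w := by
    intro z hz
    rw [hA] at hz
    rcases hz with ⟨w, hw, hwe⟩ | ⟨w, hw, hwe⟩
    · exact ⟨1, w, Or.inl rfl, hw, hwe.symm⟩
    · exact ⟨2, w, Or.inr rfl, hw, hwe.symm⟩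
  obtain ⟨j, w, hj, hwA, hzw⟩ := hstep z₀ hz₀
  obtain ⟨k, u, hk, huA, hwu⟩ := hstep w hwA
  set M : ℝ := ‖z₀ - P‖ with hM
  set e : ℕ → ℂ := fun i => Complex.exp ((-1:ℂ)^i * Complex.I * (Real.pi/3)) with he
  have habsP : ‖P‖ = 1 + lam / 2 := by
    rw [hP, Complex.norm_real, Real.norm_eq_abs, _root_.abs_of_nonneg (by linarith)]
  have habs_u : ‖u‖ ≤ M + (1 + lam / 2) := by
    have h1' : ‖u‖ ≤ ‖u - P‖ + ‖P‖ := by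
      simpa using norm_add_le (u - P) P
    have h2' := hub u huA
    rw [habsP] at h1'
    linarith
  have key : z₀ - P = (lam:ℂ) * (e j - 1/2) + (lam:ℂ)^2 * (e j * (e k * u)) := by
    rw [hzw, hwu]
    simp only [fmap, hP, he]
    push_cast
    ring
  have hMle : M ≤ lam * (Real.sqrt 3 / 2) + lam ^ 2 * (M + (1 + lam / 2)) := by
    have t1 : ‖(lam:ℂ) * (e j - 1/2)‖ = lam * (Real.sqrt 3 / 2) := by
      rw [norm_mul, Complex.norm_real, Real.norm_eq_abs, _root_.abs_of_nonneg h0.le, he]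
      rw [ehalf j hj]
    have t2 : ‖(lam:ℂ)^2 * (e j * (e k * u))‖ = lam ^ 2 * ‖u‖ := by
      rw [norm_mul, norm_pow, Complex.norm_real, Real.norm_eq_abs, _root_.abs_of_nonneg h0.le,
        norm_mul, norm_mul, he, eabs j, eabs k, one_mul, one_mul]
    have step : ‖z₀ - P‖
        ≤ lam * (Real.sqrt 3 / 2) + lam ^ 2 * ‖u‖ := by
      rw [key]
      calc ‖(lam:ℂ) * (e j - 1/2) + (lam:ℂ)^2 * (e j * (e k * u))‖
          ≤ ‖(lam:ℂ) * (e j - 1/2)‖ + ‖(lam:ℂ)^2 * (e j * (e k * u))‖ :=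
            norm_add_le _ _
        _ = lam * (Real.sqrt 3 / 2) + lam ^ 2 * ‖u‖ := by rw [t1, t2]
    have : lam ^ 2 * ‖u‖ ≤ lam ^ 2 * (M + (1 + lam / 2)) :=
      mul_le_mul_of_nonneg_left habs_u (sq_nonneg lam)
    calc M = ‖z₀ - P‖ := hM
      _ ≤ lam * (Real.sqrt 3 / 2) + lam ^ 2 * ‖u‖ := step
      _ ≤ _ := by linarith
  have hMpos : (0:ℝ) ≤ M := norm_nonneg _
  have hs : Real.sqrt 3 < 1.74 := by
    nlinarith [Real.sq_sqrt (by norm_num : (0:ℝ) ≤ 3), Real.sqrt_nonneg 3]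
  have h2 : M * (1 - lam ^ 2) ≤ lam * (Real.sqrt 3 / 2) + lam ^ 2 * (1 + lam / 2) := by
    nlinarith [hMle]
  have h3 : lam * (Real.sqrt 3 / 2) + lam ^ 2 * (1 + lam / 2) < lam * (1 - lam ^ 2) := by
    nlinarith [mul_lt_mul_of_pos_left hs h0]
  have hMlt : M < lam := by
    have hpos : (0:ℝ) < 1 - lam ^ 2 := by nlinarith
    have := h2.trans_lt h3
    exact lt_of_mul_lt_mul_right this hpos.le
  intro z hz
  rw [mem_ball, Complex.dist_eq]
  exact lt_of_le_of_lt (hub z hz) hMlt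
end

section
/- Fix 0 < λ < 1/2, and let A be the attractor of f_j(z) = 1 + λ e^{(−1)^j iπ/3} z (j = 1,2). Let Y = {(x,y) : x = 0} be the vertical axis. Then dist(Y, A) ≥ 1 + λ/2 − λ²(1 + 2λ)/(2(1 − λ²)). -/
open Complex

/-- For 0 < λ < 1/2, every point of the attractor A is at distance at least
1 + λ/2 − λ²(1+2λ)/(2(1−λ²)) from every point of the vertical axis Y = {x = 0};
i.e. dist(Y, A) is at least this bound. -/
theorem dist_axis_attractor (lam : ℝ) (h0 : 0 < lam) (h1 : lam < 1 / 2)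
    (A : Set ℂ) (hne : A.Nonempty) (hcpt : IsCompact A)
    (hA : A = fmap lam 1 '' A ∪ fmap lam 2 '' A) :
    ∀ a ∈ A, ∀ y ∈ {z : ℂ | z.re = 0},
      1 + lam / 2 - lam ^ 2 * (1 + 2 * lam) / (2 * (1 - lam ^ 2)) ≤ dist a y := by
  have hs3 : Real.sqrt 3 ^ 2 = 3 := Real.sq_sqrt (by norm_num)
  set s : ℝ := Real.sqrt 3 with hs
  have hsI : ((s:ℂ) * I) ^ 2 = -3 := by
    have h3 : ((s:ℂ)) ^ 2 = 3 := by
      rw [hs]; norm_cast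
    rw [mul_pow, h3, Complex.I_sq]; ring
  -- the six rotations
  set ep : ℂ := ((1/2 : ℝ) : ℂ) + ((s/2 : ℝ) : ℂ) * I with hep
  set eb : ℂ := ((1/2 : ℝ) : ℂ) - ((s/2 : ℝ) : ℂ) * I with heb
  set w1 : ℂ := ((-(1/2) : ℝ) : ℂ) + ((s/2 : ℝ) : ℂ) * I with hw1
  set w2 : ℂ := ((-(1/2) : ℝ) : ℂ) - ((s/2 : ℝ) : ℂ) * I with hw2
  -- real parts
  have hepre : ep.re = 1/2 := by rw [hep]; simp
  have hebre : eb.re = 1/2 := by rw [heb]; simp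
  have hw1re : w1.re = -(1/2) := by rw [hw1]; simp
  have hw2re : w2.re = -(1/2) := by rw [hw2]; simp
  -- multiplication table
  have pepep : ep * ep = w1 := by rw [hep, hw1]; push_cast; linear_combination (1/4 : ℂ) * hsI
  have pepeb : ep * eb = 1 := by rw [hep, heb]; push_cast; linear_combination (-1/4 : ℂ) * hsI
  have pebep : eb * ep = 1 := by rw [hep, heb]; push_cast; linear_combination (-1/4 : ℂ) * hsI
  have pebeb : eb * eb = w2 := by rw [heb, hw2]; push_cast; linear_combination (1/4 : ℂ) * hsI
  have pnegep : (-1 : ℂ) * ep = w2 := by rw [hep, hw2]; push_cast; ring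
  have pnegeb : (-1 : ℂ) * eb = w1 := by rw [heb, hw1]; push_cast; ring
  have pw1ep : w1 * ep = -1 := by rw [hep, hw1]; push_cast; linear_combination (1/4 : ℂ) * hsI
  have pw1eb : w1 * eb = ep := by rw [hep, heb, hw1]; push_cast; linear_combination (-1/4 : ℂ) * hsI
  have pw2ep : w2 * ep = eb := by rw [hep, heb, hw2]; push_cast; linear_combination (-1/4 : ℂ) * hsI
  have pw2eb : w2 * eb = -1 := by rw [heb, hw2]; push_cast; linear_combination (1/4 : ℂ) * hsI
  -- fmap formulas
  have hexp1 : Complex.exp ((-1 : ℂ) ^ 1 * Complex.I * (Real.pi / 3)) = eb := by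
    have h : ((-1 : ℂ) ^ 1 * Complex.I * (Real.pi / 3)) = ((-(Real.pi/3) : ℝ) : ℂ) * I := by
      push_cast; ring
    rw [h, Complex.exp_mul_I, ← Complex.ofReal_cos, ← Complex.ofReal_sin,
      Real.cos_neg, Real.sin_neg, Real.cos_pi_div_three, Real.sin_pi_div_three, heb, hs]
    all_goals push_cast
    all_goals ring
  have hexp2 : Complex.exp ((-1 : ℂ) ^ 2 * Complex.I * (Real.pi / 3)) = ep := by
    have h : ((-1 : ℂ) ^ 2 * Complex.I * (Real.pi / 3)) = (((Real.pi/3) : ℝ) : ℂ) * I := by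
      push_cast; ring
    rw [h, Complex.exp_mul_I, ← Complex.ofReal_cos, ← Complex.ofReal_sin,
      Real.cos_pi_div_three, Real.sin_pi_div_three, hep, hs]
  have hmem : ∀ a ∈ A, ∃ e, (e = ep ∨ e = eb) ∧ ∃ b ∈ A, a = 1 + (lam : ℂ) * e * b := by
    intro a ha
    rw [hA] at ha
    rcases ha with ⟨b, hb, rfl⟩ | ⟨b, hb, rfl⟩
    · exact ⟨eb, Or.inr rfl, b, hb, by rw [fmap, hexp1]⟩
    · exact ⟨ep, Or.inl rfl, b, hb, by rw [fmap, hexp2]⟩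
  -- key algebraic step
  have key : ∀ (η e ω b : ℂ), η * e = ω →
      η * (1 + (lam : ℂ) * e * b) = η + (lam : ℂ) * (ω * b) := by
    intro η e ω b h
    linear_combination (lam : ℂ) * b * h
  -- the min functions
  set F : ℂ → ℝ := fun z => min (min z.re ((w1 * z).re)) ((w2 * z).re) with hF
  set G : ℂ → ℝ := fun z => min (min ((ep * z).re) ((-z).re)) ((eb * z).re) with hG
  have hFc : Continuous F := by
    apply Continuous.min
    apply Continuous.min
    · exact Complex.continuous_re
    · exact Complex.continuous_re.comp (continuous_const.mul continuous_id)
    · exact Complex.continuous_re.comp (continuous_const.mul continuous_id)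
  have hGc : Continuous G := by
    apply Continuous.min
    apply Continuous.min
    · exact Complex.continuous_re.comp (continuous_const.mul continuous_id)
    · exact Complex.continuous_re.comp continuous_neg
    · exact Complex.continuous_re.comp (continuous_const.mul continuous_id)
  obtain ⟨aF, haF, hminF⟩ := hcpt.exists_isMinOn hne hFc.continuousOn
  obtain ⟨aG, haG, hminG⟩ := hcpt.exists_isMinOn hne hGc.continuousOn
  set u : ℝ := F aF with hu
  set v : ℝ := G aG with hv
  have hFle : ∀ b ∈ A, u ≤ F b := fun b hb => isMinOn_iff.mp hminF b hb
  have hGle : ∀ b ∈ A, v ≤ G b := fun b hb => isMinOn_iff.mp hminG b hb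
  have hu1 : ∀ b ∈ A, u ≤ b.re := fun b hb =>
    le_trans (hFle b hb) (le_trans (min_le_left _ _) (min_le_left _ _))
  have huw1 : ∀ b ∈ A, u ≤ (w1 * b).re := fun b hb =>
    le_trans (hFle b hb) (le_trans (min_le_left _ _) (min_le_right _ _))
  have huw2 : ∀ b ∈ A, u ≤ (w2 * b).re := fun b hb =>
    le_trans (hFle b hb) (min_le_right _ _)
  have hvep : ∀ b ∈ A, v ≤ (ep * b).re := fun b hb =>
    le_trans (hGle b hb) (le_trans (min_le_left _ _) (min_le_left _ _))
  have hvneg : ∀ b ∈ A, v ≤ (-b).re := fun b hb =>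
    le_trans (hGle b hb) (le_trans (min_le_left _ _) (min_le_right _ _))
  have hveb : ∀ b ∈ A, v ≤ (eb * b).re := fun b hb =>
    le_trans (hGle b hb) (min_le_right _ _)
  -- even rotation bound, uniform
  have hueven : ∀ ω b, (ω = 1 ∨ ω = w1 ∨ ω = w2) → b ∈ A → u ≤ (ω * b).re := by
    rintro ω b (rfl | rfl | rfl) hb
    · rw [one_mul]; exact hu1 b hb
    · exact huw1 b hb
    · exact huw2 b hb
  have hvodd : ∀ η b, (η = ep ∨ η = -1 ∨ η = eb) → b ∈ A → v ≤ (η * b).re := by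
    rintro η b (rfl | rfl | rfl) hb
    · exact hvep b hb
    · rw [neg_one_mul]; exact hvneg b hb
    · exact hveb b hb
  -- component estimate: for η in the odd list and a = 1 + λ e b,
  -- (η a).re = η.re + λ (ω b).re  with ω = η e even.
  have comp : ∀ (η e ω : ℂ) (b : ℂ), η * e = ω →
      (η * (1 + (lam : ℂ) * e * b)).re = η.re + lam * (ω * b).re := by
    intro η e ω b h
    rw [key η e ω b h]
    simp [Complex.add_re, Complex.re_ofReal_mul]
  -- Claim: -1 + lam * u ≤ v
  have hvu : -1 + lam * u ≤ v := by
    obtain ⟨e, he, b, hbA, hbe⟩ := hmem aG haG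
    have bound : ∀ (η ω : ℂ), η * e = ω → (ω = 1 ∨ ω = w1 ∨ ω = w2) → -(1:ℝ) ≤ η.re →
        -1 + lam * u ≤ (η * aG).re := by
      intro η ω hprod hωmem hηre
      rw [hbe, comp η e ω b hprod]
      have h2 := mul_le_mul_of_nonneg_left (hueven ω b hωmem hbA) h0.le
      linarith
    have c1 : -1 + lam * u ≤ (ep * aG).re := by
      rcases he with rfl | rfl
      · exact bound ep w1 pepep (Or.inr (Or.inl rfl)) (by rw [hepre]; norm_num)
      · exact bound ep 1 pepeb (Or.inl rfl) (by rw [hepre]; norm_num)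
    have c2 : -1 + lam * u ≤ (-aG).re := by
      have h2 : -1 + lam * u ≤ ((-1 : ℂ) * aG).re := by
        rcases he with rfl | rfl
        · exact bound (-1) w2 pnegep (Or.inr (Or.inr rfl)) (by norm_num)
        · exact bound (-1) w1 pnegeb (Or.inr (Or.inl rfl)) (by norm_num)
      rwa [neg_one_mul] at h2
    have c3 : -1 + lam * u ≤ (eb * aG).re := by
      rcases he with rfl | rfl
      · exact bound eb 1 pebep (Or.inl rfl) (by rw [hebre]; norm_num)
      · exact bound eb w2 pebeb (Or.inr (Or.inr rfl)) (by rw [hebre]; norm_num)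
    exact le_min (le_min c1 c2) c3
  -- Claim: -1/2 + lam * v ≤ u
  have huv : -(1:ℝ)/2 + lam * v ≤ u := by
    obtain ⟨e, he, b, hbA, hbe⟩ := hmem aF haF
    have bound : ∀ (ω η : ℂ), ω * e = η → (η = ep ∨ η = -1 ∨ η = eb) → -(1:ℝ)/2 ≤ ω.re →
        -(1:ℝ)/2 + lam * v ≤ (ω * aF).re := by
      intro ω η hprod hηmem hωre
      rw [hbe, comp ω e η b hprod]
      have h2 := mul_le_mul_of_nonneg_left (hvodd η b hηmem hbA) h0.le
      linarith
    have c1 : -(1:ℝ)/2 + lam * v ≤ aF.re := by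
      have h1 : -(1:ℝ)/2 + lam * v ≤ ((1:ℂ) * aF).re := by
        rcases he with rfl | rfl
        · exact bound 1 ep (one_mul ep) (Or.inl rfl) (by norm_num)
        · exact bound 1 eb (one_mul eb) (Or.inr (Or.inr rfl)) (by norm_num)
      rwa [one_mul] at h1
    have c2 : -(1:ℝ)/2 + lam * v ≤ (w1 * aF).re := by
      rcases he with rfl | rfl
      · exact bound w1 (-1) pw1ep (Or.inr (Or.inl rfl)) (by rw [hw1re]; norm_num)
      · exact bound w1 ep pw1eb (Or.inl rfl) (by rw [hw1re]; norm_num)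
    have c3 : -(1:ℝ)/2 + lam * v ≤ (w2 * aF).re := by
      rcases he with rfl | rfl
      · exact bound w2 eb pw2ep (Or.inr (Or.inr rfl)) (by rw [hw2re]; norm_num)
      · exact bound w2 (-1) pw2eb (Or.inr (Or.inl rfl)) (by rw [hw2re]; norm_num)
    exact le_min (le_min c1 c2) c3
  -- solve the recursion
  have hD : (0:ℝ) < 2 * (1 - lam ^ 2) := by nlinarith
  have hsolve : -(1/2 : ℝ) - lam ≤ (1 - lam ^ 2) * u := by
    nlinarith [mul_le_mul_of_nonneg_left hvu h0.le]
  have hfrac : -(lam ^ 2 * (1 + 2 * lam)) / (2 * (1 - lam ^ 2)) ≤ lam ^ 2 * u := by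
    rw [div_le_iff₀ hD]
    nlinarith [mul_le_mul_of_nonneg_left hsolve (by positivity : (0:ℝ) ≤ 2 * lam ^ 2)]
  -- final bound on real parts of A
  intro a ha y hy
  obtain ⟨e, he, b, hbA, hbe⟩ := hmem a ha
  obtain ⟨e', he', c, hcA, hce⟩ := hmem b hbA
  have hprod : ∃ ω, (ω = 1 ∨ ω = w1 ∨ ω = w2) ∧ e * e' = ω := by
    rcases he with rfl | rfl <;> rcases he' with rfl | rfl
    · exact ⟨w1, Or.inr (Or.inl rfl), pepep⟩
    · exact ⟨1, Or.inl rfl, pepeb⟩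
    · exact ⟨1, Or.inl rfl, pebep⟩
    · exact ⟨w2, Or.inr (Or.inr rfl), pebeb⟩
  obtain ⟨ω, hωmem, hω⟩ := hprod
  have here : e.re = 1/2 := by rcases he with rfl | rfl; exacts [hepre, hebre]
  have hare : a.re = 1 + lam * (1/2 + lam * (ω * c).re) := by
    rw [hbe, hce]
    have : (1 + (lam : ℂ) * e * (1 + (lam : ℂ) * e' * c)).re
        = 1 + lam * (e * (1 + (lam : ℂ) * e' * c)).re := by
      have h' : (1 + (lam : ℂ) * e * (1 + (lam : ℂ) * e' * c))
          = 1 + (lam : ℂ) * (e * (1 + (lam : ℂ) * e' * c)) := by ring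
      rw [h']
      simp [Complex.add_re, Complex.re_ofReal_mul]
    rw [this, comp e e' ω c hω, here]
  have hcre : u ≤ (ω * c).re := hueven ω c hωmem hcA
  have hare2 : 1 + lam / 2 + lam ^ 2 * u ≤ a.re := by
    rw [hare]
    nlinarith [mul_le_mul_of_nonneg_left hcre (by positivity : (0:ℝ) ≤ lam ^ 2)]
  have hgoal : 1 + lam / 2 - lam ^ 2 * (1 + 2 * lam) / (2 * (1 - lam ^ 2)) ≤ a.re := by
    have hrw : 1 + lam / 2 - lam ^ 2 * (1 + 2 * lam) / (2 * (1 - lam ^ 2))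
        = 1 + lam / 2 + (-(lam ^ 2 * (1 + 2 * lam))) / (2 * (1 - lam ^ 2)) := by ring
    rw [hrw]
    linarith
  have hyre : y.re = 0 := hy
  calc 1 + lam / 2 - lam ^ 2 * (1 + 2 * lam) / (2 * (1 - lam ^ 2)) ≤ a.re := hgoal
    _ = (a - y).re := by rw [Complex.sub_re, hyre]; ring
    _ ≤ ‖a - y‖ := Complex.re_le_norm _
    _ = dist a y := (Complex.dist_eq a y).symm
end

section
/- Fix 0 < λ < 1/2 and let A be the attractor of f_j(z) = 1 + λ e^{(−1)^j iπ/3} z (j = 1,2). Then dist(f₁(A), f₂(A)) ≥ √3·λ − √3·λ³/(1 − λ). -/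
open Complex

noncomputable def ww1 : ℂ := ⟨1/2, -(Real.sqrt 3/2)⟩
noncomputable def ww2 : ℂ := ⟨1/2, Real.sqrt 3/2⟩

lemma fmap1_eq (lam : ℝ) (z : ℂ) : fmap lam 1 z = 1 + (lam:ℂ) * ww1 * z := by
  unfold fmap
  congr 1
  congr 1
  congr 1
  have h : ((-1 : ℂ)) ^ 1 * Complex.I * (Real.pi / 3) = ((-(Real.pi/3) : ℝ) : ℂ) * Complex.I := by
    push_cast; ring
  rw [h, Complex.exp_mul_I, ← Complex.ofReal_cos, ← Complex.ofReal_sin]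
  simp [Real.cos_pi_div_three, Real.sin_pi_div_three, Complex.ext_iff, ww1]


lemma fmap2_eq (lam : ℝ) (z : ℂ) : fmap lam 2 z = 1 + (lam:ℂ) * ww2 * z := by
  unfold fmap
  congr 1
  congr 1
  congr 1
  have h : ((-1 : ℂ)) ^ 2 * Complex.I * (Real.pi / 3) = (((Real.pi/3) : ℝ) : ℂ) * Complex.I := by
    push_cast; ring
  rw [h, Complex.exp_mul_I, ← Complex.ofReal_cos, ← Complex.ofReal_sin]
  simp [Real.cos_pi_div_three, Real.sin_pi_div_three, Complex.ext_iff, ww2]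

lemma norm_ww1 : ‖ww1‖ = 1 := by
  have hs : Real.sqrt 3 * Real.sqrt 3 = 3 := Real.mul_self_sqrt (by norm_num)
  have h : Complex.normSq ww1 = 1 := by
    simp [Complex.normSq_apply, ww1]; nlinarith
  rw [Complex.norm_def, h, Real.sqrt_one]

lemma norm_ww2 : ‖ww2‖ = 1 := by
  have hs : Real.sqrt 3 * Real.sqrt 3 = 3 := Real.mul_self_sqrt (by norm_num)
  have h : Complex.normSq ww2 = 1 := by
    simp [Complex.normSq_apply, ww2]; nlinarith
  rw [Complex.norm_def, h, Real.sqrt_one]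

lemma norm_bound (lam : ℝ) (h0 : 0 < lam) (h1 : lam < 1 / 2)
    (A : Set ℂ) (hne : A.Nonempty) (hcpt : IsCompact A)
    (hA : A = fmap lam 1 '' A ∪ fmap lam 2 '' A) :
    ∀ z ∈ A, ‖z‖ ≤ 1 / (1 - lam) := by
  obtain ⟨z₀, hz₀, hmax⟩ := hcpt.exists_isMaxOn hne continuous_norm.continuousOn
  have hlam1 : (0:ℝ) < 1 - lam := by linarith
  have hkey : ‖z₀‖ ≤ 1 / (1 - lam) := by
    have hz₀' := hz₀
    rw [hA] at hz₀'
    have hb : ‖z₀‖ ≤ 1 + lam * ‖z₀‖ := by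
      rcases hz₀' with ⟨u, hu, rfl⟩ | ⟨u, hu, rfl⟩
      · rw [fmap1_eq]
        calc ‖1 + (lam:ℂ) * ww1 * u‖ ≤ ‖(1:ℂ)‖ + ‖(lam:ℂ) * ww1 * u‖ := norm_add_le _ _
        _ = 1 + lam * ‖u‖ := by
            rw [norm_mul, norm_mul, norm_ww1, Complex.norm_real]
            simp [abs_of_pos h0]
        _ ≤ 1 + lam * ‖fmap lam 1 u‖ := by
            have h := hmax hu
            simp only [Set.mem_setOf_eq] at h
            nlinarith [h]
        _ = 1 + lam * ‖1 + (lam:ℂ) * ww1 * u‖ := by rw [fmap1_eq]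
      · rw [fmap2_eq]
        calc ‖1 + (lam:ℂ) * ww2 * u‖ ≤ ‖(1:ℂ)‖ + ‖(lam:ℂ) * ww2 * u‖ := norm_add_le _ _
        _ = 1 + lam * ‖u‖ := by
            rw [norm_mul, norm_mul, norm_ww2, Complex.norm_real]
            simp [abs_of_pos h0]
        _ ≤ 1 + lam * ‖fmap lam 2 u‖ := by
            have h := hmax hu
            simp only [Set.mem_setOf_eq] at h
            nlinarith [h]
        _ = 1 + lam * ‖1 + (lam:ℂ) * ww2 * u‖ := by rw [fmap2_eq]
    rw [le_div_iff₀ hlam1]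
    nlinarith [hb]
  intro z hz
  exact le_trans (hmax hz) hkey

lemma im_bound (lam : ℝ) (h0 : 0 < lam) (h1 : lam < 1 / 2)
    (A : Set ℂ) (hne : A.Nonempty) (hcpt : IsCompact A)
    (hA : A = fmap lam 1 '' A ∪ fmap lam 2 '' A) :
    ∀ z ∈ A, |z.im| ≤ Real.sqrt 3 * lam / (2 * (1 - lam)) := by
  have hs : Real.sqrt 3 * Real.sqrt 3 = 3 := Real.mul_self_sqrt (by norm_num)
  have hs0 : 0 < Real.sqrt 3 := Real.sqrt_pos.mpr (by norm_num)
  have hlam1 : (0:ℝ) < 1 - lam := by linarith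
  set s := Real.sqrt 3 with hsdef
  set d0 : ℂ := ⟨0, -1⟩ with hd0
  set d1 : ℂ := ⟨s/2, -(1/2)⟩ with hd1
  set d2 : ℂ := ⟨s/2, 1/2⟩ with hd2
  set d3 : ℂ := ⟨0, 1⟩ with hd3
  set d4 : ℂ := ⟨-(s/2), 1/2⟩ with hd4
  set d5 : ℂ := ⟨-(s/2), -(1/2)⟩ with hd5
  set g : ℂ → ℂ → ℝ := fun u z => (u * (z - 1)).re with hg
  set F : ℂ → ℝ := fun z => g d0 z ⊔ g d1 z ⊔ g d2 z ⊔ g d3 z ⊔ g d4 z ⊔ g d5 z with hF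
  have hgc : ∀ u : ℂ, Continuous (g u) := fun u =>
    Complex.continuous_re.comp (continuous_const.mul (continuous_id.sub continuous_const))
  have hFc : Continuous F :=
    ((((((hgc d0).max (hgc d1)).max (hgc d2)).max (hgc d3)).max (hgc d4)).max (hgc d5))
  obtain ⟨z₀, hz₀, hmax⟩ := hcpt.exists_isMaxOn hne hFc.continuousOn
  have hmax' : ∀ y ∈ A, F y ≤ F z₀ := by
    intro y hy
    have := hmax hy
    simpa using this
  -- each component is below F
  have le0 : ∀ y, g d0 y ≤ F y := fun y =>
    le_sup_of_le_left (le_sup_of_le_left (le_sup_of_le_left (le_sup_of_le_left le_sup_left)))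
  have le1 : ∀ y, g d1 y ≤ F y := fun y =>
    le_sup_of_le_left (le_sup_of_le_left (le_sup_of_le_left (le_sup_of_le_left le_sup_right)))
  have le2 : ∀ y, g d2 y ≤ F y := fun y =>
    le_sup_of_le_left (le_sup_of_le_left (le_sup_of_le_left le_sup_right))
  have le3 : ∀ y, g d3 y ≤ F y := fun y =>
    le_sup_of_le_left (le_sup_of_le_left le_sup_right)
  have le4 : ∀ y, g d4 y ≤ F y := fun y => le_sup_of_le_left le_sup_right
  have le5 : ∀ y, g d5 y ≤ F y := fun y => le_sup_right
  -- multiplication relations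
  have hs2 : s ^ 2 = 3 := by nlinarith [hs]
  have r10 : d0 * ww1 = d5 := by
    apply Complex.ext <;>
      simp only [hd0, hd1, hd2, hd3, hd4, hd5, ww1, Complex.mul_re, Complex.mul_im] <;>
      ring_nf <;> linarith [hs2]
  have r11 : d1 * ww1 = d0 := by
    apply Complex.ext <;>
      simp only [hd0, hd1, hd2, hd3, hd4, hd5, ww1, Complex.mul_re, Complex.mul_im] <;>
      ring_nf <;> linarith [hs2]
  have r12 : d2 * ww1 = d1 := by
    apply Complex.ext <;>
      simp only [hd0, hd1, hd2, hd3, hd4, hd5, ww1, Complex.mul_re, Complex.mul_im] <;>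
      ring_nf <;> linarith [hs2]
  have r13 : d3 * ww1 = d2 := by
    apply Complex.ext <;>
      simp only [hd0, hd1, hd2, hd3, hd4, hd5, ww1, Complex.mul_re, Complex.mul_im] <;>
      ring_nf <;> linarith [hs2]
  have r14 : d4 * ww1 = d3 := by
    apply Complex.ext <;>
      simp only [hd0, hd1, hd2, hd3, hd4, hd5, ww1, Complex.mul_re, Complex.mul_im] <;>
      ring_nf <;> linarith [hs2]
  have r15 : d5 * ww1 = d4 := by
    apply Complex.ext <;>
      simp only [hd0, hd1, hd2, hd3, hd4, hd5, ww1, Complex.mul_re, Complex.mul_im] <;>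
      ring_nf <;> linarith [hs2]
  have r20 : d0 * ww2 = d1 := by
    apply Complex.ext <;>
      simp only [hd0, hd1, hd2, hd3, hd4, hd5, ww2, Complex.mul_re, Complex.mul_im] <;>
      ring_nf <;> linarith [hs2]
  have r21 : d1 * ww2 = d2 := by
    apply Complex.ext <;>
      simp only [hd0, hd1, hd2, hd3, hd4, hd5, ww2, Complex.mul_re, Complex.mul_im] <;>
      ring_nf <;> linarith [hs2]
  have r22 : d2 * ww2 = d3 := by
    apply Complex.ext <;>
      simp only [hd0, hd1, hd2, hd3, hd4, hd5, ww2, Complex.mul_re, Complex.mul_im] <;>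
      ring_nf <;> linarith [hs2]
  have r23 : d3 * ww2 = d4 := by
    apply Complex.ext <;>
      simp only [hd0, hd1, hd2, hd3, hd4, hd5, ww2, Complex.mul_re, Complex.mul_im] <;>
      ring_nf <;> linarith [hs2]
  have r24 : d4 * ww2 = d5 := by
    apply Complex.ext <;>
      simp only [hd0, hd1, hd2, hd3, hd4, hd5, ww2, Complex.mul_re, Complex.mul_im] <;>
      ring_nf <;> linarith [hs2]
  have r25 : d5 * ww2 = d0 := by
    apply Complex.ext <;>
      simp only [hd0, hd1, hd2, hd3, hd4, hd5, ww2, Complex.mul_re, Complex.mul_im] <;>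
      ring_nf <;> linarith [hs2]
  -- expansion of g at an image point
  have expand : ∀ (e dm dk : ℂ), dm * e = dk → ∀ u : ℂ,
      g dm (1 + (lam:ℂ) * e * u) = lam * (g dk u + dk.re) := by
    intro e dm dk hrel u
    have h1 : dm * ((1 + (lam:ℂ) * e * u) - 1) = (lam:ℂ) * (dk * (u - 1) + dk) := by
      rw [← hrel]; ring
    simp only [hg]
    rw [h1, Complex.re_ofReal_mul, Complex.add_re]
  -- re values of directions
  have hre0 : d0.re = 0 := rfl
  have hre1 : d1.re = s/2 := rfl
  have hre2 : d2.re = s/2 := rfl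
  have hre3 : d3.re = 0 := rfl
  have hre4 : d4.re = -(s/2) := rfl
  have hre5 : d5.re = -(s/2) := rfl
  -- the fixed point inequality
  have hstep : F z₀ ≤ lam * (s/2 + F z₀) := by
    have hz₀' := hz₀
    rw [hA] at hz₀'
    rcases hz₀' with ⟨u, hu, hzeq⟩ | ⟨u, hu, hzeq⟩
    · rw [fmap1_eq] at hzeq
      subst hzeq
      have hFu : F u ≤ F (1 + (lam:ℂ) * ww1 * u) := hmax' u hu
      have key : ∀ dm dk : ℂ, dm * ww1 = dk → (∀ y, g dk y ≤ F y) → dk.re ≤ s/2 →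
          g dm (1 + (lam:ℂ) * ww1 * u) ≤ lam * (s/2 + F (1 + (lam:ℂ) * ww1 * u)) := by
        intro dm dk hrel hky hkre
        rw [expand ww1 dm dk hrel u]
        exact mul_le_mul_of_nonneg_left (by linarith [hky u, hFu]) h0.le
      show (g d0 _ ⊔ g d1 _ ⊔ g d2 _ ⊔ g d3 _ ⊔ g d4 _ ⊔ g d5 _) ≤ _
      refine sup_le (sup_le (sup_le (sup_le (sup_le ?_ ?_) ?_) ?_) ?_) ?_
      · exact key d0 d5 r10 le5 (by rw [hre5]; linarith)
      · exact key d1 d0 r11 le0 (by rw [hre0]; linarith)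
      · exact key d2 d1 r12 le1 (by rw [hre1])
      · exact key d3 d2 r13 le2 (by rw [hre2])
      · exact key d4 d3 r14 le3 (by rw [hre3]; linarith)
      · exact key d5 d4 r15 le4 (by rw [hre4]; linarith)
    · rw [fmap2_eq] at hzeq
      subst hzeq
      have hFu : F u ≤ F (1 + (lam:ℂ) * ww2 * u) := hmax' u hu
      have key : ∀ dm dk : ℂ, dm * ww2 = dk → (∀ y, g dk y ≤ F y) → dk.re ≤ s/2 →
          g dm (1 + (lam:ℂ) * ww2 * u) ≤ lam * (s/2 + F (1 + (lam:ℂ) * ww2 * u)) := by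
        intro dm dk hrel hky hkre
        rw [expand ww2 dm dk hrel u]
        exact mul_le_mul_of_nonneg_left (by linarith [hky u, hFu]) h0.le
      show (g d0 _ ⊔ g d1 _ ⊔ g d2 _ ⊔ g d3 _ ⊔ g d4 _ ⊔ g d5 _) ≤ _
      refine sup_le (sup_le (sup_le (sup_le (sup_le ?_ ?_) ?_) ?_) ?_) ?_
      · exact key d0 d1 r20 le1 (by rw [hre1])
      · exact key d1 d2 r21 le2 (by rw [hre2])
      · exact key d2 d3 r22 le3 (by rw [hre3]; linarith)
      · exact key d3 d4 r23 le4 (by rw [hre4]; linarith)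
      · exact key d4 d5 r24 le5 (by rw [hre5]; linarith)
      · exact key d5 d0 r25 le0 (by rw [hre0]; linarith)
  have hFz₀ : F z₀ ≤ s * lam / (2 * (1 - lam)) := by
    rw [le_div_iff₀ (by linarith)]
    nlinarith [hstep]
  intro z hz
  have hFz : F z ≤ s * lam / (2 * (1 - lam)) := le_trans (hmax' z hz) hFz₀
  have hg0 : g d0 z = z.im := by
    show (d0 * (z - 1)).re = z.im
    rw [hd0]
    simp [Complex.mul_re]
  have hg3 : g d3 z = -z.im := by
    show (d3 * (z - 1)).re = -z.im
    rw [hd3]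
    simp [Complex.mul_re]
  rw [abs_le]
  constructor
  · have := le3 z
    rw [hg3] at this
    linarith [le_trans this hFz]
  · have := le0 z
    rw [hg0] at this
    linarith [le_trans this hFz]

lemma re_bound (lam : ℝ) (h0 : 0 < lam) (h1 : lam < 1 / 2)
    (A : Set ℂ) (hne : A.Nonempty) (hcpt : IsCompact A)
    (hA : A = fmap lam 1 '' A ∪ fmap lam 2 '' A) :
    ∀ z ∈ A, 1 - lam / (1 - lam) ≤ z.re := by
  have hlam1 : (0:ℝ) < 1 - lam := by linarith
  have hnb := norm_bound lam h0 h1 A hne hcpt hA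
  intro z hz
  rw [hA] at hz
  have key : ∀ (e : ℂ) (u : ℂ), ‖e‖ = 1 → u ∈ A → 1 - lam / (1 - lam) ≤ (1 + (lam:ℂ) * e * u).re := by
    intro e u he hu
    have h1' : ((1:ℂ) + (lam:ℂ) * e * u).re = 1 + lam * (e * u).re := by
      rw [Complex.add_re, Complex.one_re, mul_assoc, Complex.re_ofReal_mul]
    rw [h1']
    have habs : |(e * u).re| ≤ ‖u‖ := by
      calc |(e * u).re| ≤ ‖e * u‖ := Complex.abs_re_le_norm _
      _ = ‖e * u‖ := rfl
      _ = ‖u‖ := by rw [norm_mul, he, one_mul]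
    have hu' : ‖u‖ ≤ 1 / (1 - lam) := hnb u hu
    have h2 : -(1 / (1 - lam)) ≤ (e * u).re := by
      have := abs_le.mp habs
      linarith [this.1]
    have h3 : lam * (-(1 / (1 - lam))) ≤ lam * (e * u).re :=
      mul_le_mul_of_nonneg_left h2 h0.le
    have h4 : lam * (1 / (1 - lam)) = lam / (1 - lam) := by ring
    nlinarith [h3]
  rcases hz with ⟨u, hu, hzeq⟩ | ⟨u, hu, hzeq⟩
  · rw [fmap1_eq] at hzeq; subst hzeq; exact key ww1 u norm_ww1 hu
  · rw [fmap2_eq] at hzeq; subst hzeq; exact key ww2 u norm_ww2 hu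

lemma linear_bound (lam : ℝ) (h0 : 0 < lam) (h1 : lam < 1 / 2)
    (A : Set ℂ) (hne : A.Nonempty) (hcpt : IsCompact A)
    (hA : A = fmap lam 1 '' A ∪ fmap lam 2 '' A) :
    ∀ z ∈ A, z.im - Real.sqrt 3 * z.re ≤ -Real.sqrt 3 + Real.sqrt 3 * lam ^ 2 / (1 - lam) ∧
      -z.im - Real.sqrt 3 * z.re ≤ -Real.sqrt 3 + Real.sqrt 3 * lam ^ 2 / (1 - lam) := by
  have hs : Real.sqrt 3 * Real.sqrt 3 = 3 := Real.mul_self_sqrt (by norm_num)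
  have hs0 : 0 < Real.sqrt 3 := Real.sqrt_pos.mpr (by norm_num)
  have hlam1 : (0:ℝ) < 1 - lam := by linarith
  set s := Real.sqrt 3 with hsdef
  have him := im_bound lam h0 h1 A hne hcpt hA
  have hre := re_bound lam h0 h1 A hne hcpt hA
  intro z hz
  rw [hA] at hz
  -- facts about components
  have main : ∀ u : ℂ, u ∈ A → ∀ c : ℝ, (c = 2 * u.im ∨ c = -(2 * u.im) ∨
      c = -(s * u.re) - u.im ∨ c = -(s * u.re) + u.im) → lam * c ≤ s * lam ^ 2 / (1 - lam) := by
    intro u hu c hc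
    have hy := him u hu
    have hx := hre u hu
    rw [abs_le] at hy
    have hy1 : u.im ≤ s * lam / (2 * (1 - lam)) := hy.2
    have hy2 : -(s * lam / (2 * (1 - lam))) ≤ u.im := hy.1
    have hy1' : u.im * (2 * (1 - lam)) ≤ s * lam := by
      rw [← le_div_iff₀ (by linarith)]; exact hy1
    have hy2' : -u.im * (2 * (1 - lam)) ≤ s * lam := by
      rw [← le_div_iff₀ (by linarith : (0:ℝ) < 2 * (1 - lam))]
      linarith [hy2]
    have hx' : (1 - lam) - lam ≤ u.re * (1 - lam) := by
      have hdd : lam / (1 - lam) * (1 - lam) = lam := div_mul_cancel₀ _ (by linarith)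
      nlinarith [hx]
    have hsl : (0:ℝ) ≤ s * lam := by positivity
    have p1 : lam / 2 * (-u.im * (2 * (1 - lam))) ≤ lam / 2 * (s * lam) :=
      mul_le_mul_of_nonneg_left hy2' (by linarith)
    have p1' : lam / 2 * (u.im * (2 * (1 - lam))) ≤ lam / 2 * (s * lam) :=
      mul_le_mul_of_nonneg_left hy1' (by linarith)
    have p2 : (s * lam) * (1 - 2 * lam) ≤ (s * lam) * (u.re * (1 - lam)) :=
      mul_le_mul_of_nonneg_left (by linarith [hx']) hsl
    have p3 : (s * lam) * lam ≤ (s * lam) * (1 / 2) :=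
      mul_le_mul_of_nonneg_left h1.le hsl
    rw [le_div_iff₀ hlam1]
    rcases hc with rfl | rfl | rfl | rfl
    · nlinarith [p1']
    · nlinarith [p1]
    · nlinarith [p1, p2, p3]
    · nlinarith [p1', p2, p3]
  have comp : ∀ (e : ℂ) (u : ℂ), ((1:ℂ) + (lam:ℂ) * e * u).im - s * ((1:ℂ) + (lam:ℂ) * e * u).re
      = -s + lam * ((e * u).im - s * (e * u).re) ∧
      -(((1:ℂ) + (lam:ℂ) * e * u).im) - s * ((1:ℂ) + (lam:ℂ) * e * u).re
      = -s + lam * (-(e * u).im - s * (e * u).re) := by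
    intro e u
    rw [Complex.add_re, Complex.add_im, Complex.one_re, Complex.one_im, mul_assoc,
      Complex.re_ofReal_mul, Complex.im_ofReal_mul]
    constructor <;> ring
  rcases hz with ⟨u, hu, hzeq⟩ | ⟨u, hu, hzeq⟩
  · rw [fmap1_eq] at hzeq; subst hzeq
    obtain ⟨c1, c2⟩ := comp ww1 u
    have e1 : (ww1 * u).im - s * (ww1 * u).re = -(s * u.re) - u.im := by
      rw [Complex.mul_re, Complex.mul_im]
      show 1/2 * u.im + -(s/2) * u.re - s * (1/2 * u.re - -(s/2) * u.im) = _
      linear_combination (-(u.im)/2) * hs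
    have e2 : -(ww1 * u).im - s * (ww1 * u).re = -(2 * u.im) := by
      rw [Complex.mul_re, Complex.mul_im]
      show -(1/2 * u.im + -(s/2) * u.re) - s * (1/2 * u.re - -(s/2) * u.im) = _
      linear_combination (-(u.im)/2) * hs
    constructor
    · rw [c1, e1]
      have := main u hu _ (Or.inr (Or.inr (Or.inl rfl)))
      linarith
    · rw [c2, e2]
      have := main u hu _ (Or.inr (Or.inl rfl))
      linarith
  · rw [fmap2_eq] at hzeq; subst hzeq
    obtain ⟨c1, c2⟩ := comp ww2 u
    have e1 : (ww2 * u).im - s * (ww2 * u).re = 2 * u.im := by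
      rw [Complex.mul_re, Complex.mul_im]
      show 1/2 * u.im + s/2 * u.re - s * (1/2 * u.re - s/2 * u.im) = _
      linear_combination (u.im/2) * hs
    have e2 : -(ww2 * u).im - s * (ww2 * u).re = -(s * u.re) + u.im := by
      rw [Complex.mul_re, Complex.mul_im]
      show -(1/2 * u.im + s/2 * u.re) - s * (1/2 * u.re - s/2 * u.im) = _
      linear_combination (u.im/2) * hs
    constructor
    · rw [c1, e1]
      have := main u hu _ (Or.inl rfl)
      linarith
    · rw [c2, e2]
      have := main u hu _ (Or.inr (Or.inr (Or.inr rfl)))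
      linarith

/-- For 0 < λ < 1/2, the two first-level pieces f₁(A), f₂(A) of the attractor A satisfy
dist(f₁(A), f₂(A)) ≥ √3·λ − √3·λ³/(1 − λ). -/
theorem dist_pieces (lam : ℝ) (h0 : 0 < lam) (h1 : lam < 1 / 2)
    (A : Set ℂ) (hne : A.Nonempty) (hcpt : IsCompact A)
    (hA : A = fmap lam 1 '' A ∪ fmap lam 2 '' A) :
    ∀ a ∈ fmap lam 1 '' A, ∀ b ∈ fmap lam 2 '' A,
      Real.sqrt 3 * lam - Real.sqrt 3 * lam ^ 3 / (1 - lam) ≤ dist a b := by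
  have hs : Real.sqrt 3 * Real.sqrt 3 = 3 := Real.mul_self_sqrt (by norm_num)
  have hs0 : 0 < Real.sqrt 3 := Real.sqrt_pos.mpr (by norm_num)
  have hlam1 : (0:ℝ) < 1 - lam := by linarith
  set s := Real.sqrt 3 with hsdef
  have hlin := linear_bound lam h0 h1 A hne hcpt hA
  intro a ha b hb
  obtain ⟨z₁, hz₁, rfl⟩ := ha
  obtain ⟨z₂, hz₂, rfl⟩ := hb
  set Q := s * lam ^ 2 / (1 - lam) with hQ
  -- imaginary part of a
  have ha_im : (fmap lam 1 z₁).im = lam * ((z₁.im - s * z₁.re) / 2) := by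
    rw [fmap1_eq, Complex.add_im, Complex.one_im, mul_assoc, Complex.im_ofReal_mul,
      Complex.mul_im]
    show 0 + lam * (1/2 * z₁.im + -(s/2) * z₁.re) = _
    ring
  have hb_im : (fmap lam 2 z₂).im = lam * (-((-z₂.im - s * z₂.re) / 2)) := by
    rw [fmap2_eq, Complex.add_im, Complex.one_im, mul_assoc, Complex.im_ofReal_mul,
      Complex.mul_im]
    show 0 + lam * (1/2 * z₂.im + s/2 * z₂.re) = _
    ring
  have hab : (fmap lam 1 z₁).im ≤ lam * ((-s + Q) / 2) := by
    rw [ha_im]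
    exact mul_le_mul_of_nonneg_left (by linarith [(hlin z₁ hz₁).1]) h0.le
  have hbb : lam * (-((-s + Q) / 2)) ≤ (fmap lam 2 z₂).im := by
    rw [hb_im]
    exact mul_le_mul_of_nonneg_left (by linarith [(hlin z₂ hz₂).2]) h0.le
  have hdist : (fmap lam 2 z₂).im - (fmap lam 1 z₁).im ≤ dist (fmap lam 1 z₁) (fmap lam 2 z₂) := by
    rw [Complex.dist_eq]
    have h1' : |(fmap lam 1 z₁ - fmap lam 2 z₂).im| ≤ ‖fmap lam 1 z₁ - fmap lam 2 z₂‖ :=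
      Complex.abs_im_le_norm _
    rw [Complex.sub_im] at h1'
    have := abs_le.mp h1'
    linarith [this.1]
  have heq : lam * Q = s * lam ^ 3 / (1 - lam) := by rw [hQ]; ring
  nlinarith [hab, hbb, hdist]
end

section
/- Fix 0 < λ < 1/2 and define Σ ⊂ ℝ² ≅ ℂ as the closure of the union over all N ∈ ℕ and all j₁,…,j_N ∈ {1,2} of the segments f_{j₁}∘⋯∘f_{j_N}([0,1]), together with [0,1] itself, where f_j(z) = 1 + λ e^{(−1)^j iπ/3} z. Then ℋ¹(Σ) = 1/(1 − 2λ). -/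
open Complex MeasureTheory

/-- Composition f_{j₁} ∘ ⋯ ∘ f_{j_N} indexed by a word w ∈ {1,2}^N (encoded as a list of
booleans, `true ↦ f₁`, `false ↦ f₂`); the empty word gives the identity. -/
noncomputable def fword (lam : ℝ) : List Bool → ℂ → ℂ
  | [] => id
  | b :: w => fmap lam (if b then 1 else 2) ∘ fword lam w

/-- The self-similar tree Σ: the closure of the union of the segments
f_{j₁}∘⋯∘f_{j_N}([0,1]) over all N and all j₁,…,j_N ∈ {1,2} (including [0,1] itself). -/
noncomputable def SigmaTree (lam : ℝ) : Set ℂ :=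
  closure (⋃ w : List Bool, fword lam w '' segment ℝ (0 : ℂ) 1)

namespace STree

lemma exp_one : Complex.exp ((-1 : ℂ) ^ (1:ℕ) * Complex.I * (Real.pi / 3))
    = Complex.ofReal (1/2) - Complex.ofReal (Real.sqrt 3 / 2) * Complex.I := by
  have h : ((-1 : ℂ) ^ (1:ℕ) * Complex.I * (Real.pi / 3)) = ((↑(-(Real.pi/3)) : ℂ)) * Complex.I := by
    push_cast; ring
  rw [h, Complex.exp_mul_I, ← Complex.ofReal_cos, ← Complex.ofReal_sin]
  rw [Real.cos_neg, Real.sin_neg, Real.cos_pi_div_three, Real.sin_pi_div_three]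
  push_cast; ring

lemma exp_two : Complex.exp ((-1 : ℂ) ^ (2:ℕ) * Complex.I * (Real.pi / 3))
    = Complex.ofReal (1/2) + Complex.ofReal (Real.sqrt 3 / 2) * Complex.I := by
  have h : ((-1 : ℂ) ^ (2:ℕ) * Complex.I * (Real.pi / 3)) = ((↑((Real.pi/3)) : ℂ)) * Complex.I := by
    push_cast; ring
  rw [h, Complex.exp_mul_I, ← Complex.ofReal_cos, ← Complex.ofReal_sin]
  rw [Real.cos_pi_div_three, Real.sin_pi_div_three]

lemma fmap_one_re (lam : ℝ) (z : ℂ) :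
    (fmap lam 1 z).re = 1 + lam * (z.re/2 + Real.sqrt 3/2 * z.im) := by
  rw [fmap, exp_one]; simp [Complex.ext_iff]; ring

lemma fmap_one_im (lam : ℝ) (z : ℂ) :
    (fmap lam 1 z).im = lam * (z.im/2 - Real.sqrt 3/2 * z.re) := by
  rw [fmap, exp_one]; simp [Complex.ext_iff]; ring

lemma fmap_two_re (lam : ℝ) (z : ℂ) :
    (fmap lam 2 z).re = 1 + lam * (z.re/2 - Real.sqrt 3/2 * z.im) := by
  rw [fmap, exp_two]; simp [Complex.ext_iff]; ring

lemma fmap_two_im (lam : ℝ) (z : ℂ) :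
    (fmap lam 2 z).im = lam * (z.im/2 + Real.sqrt 3/2 * z.re) := by
  rw [fmap, exp_two]; simp [Complex.ext_iff]; ring

lemma abs_of {a b : ℝ} (h : a*a + b*b = 1) :
    ‖(Complex.ofReal a + Complex.ofReal b * Complex.I)‖ = 1 := by
  rw [Complex.norm_def]
  have : Complex.normSq (Complex.ofReal a + Complex.ofReal b * Complex.I) = 1 := by
    simp [Complex.normSq_apply, h]
  rw [this, Real.sqrt_one]

lemma abs_exp_one : ‖(Complex.exp ((-1 : ℂ) ^ (1:ℕ) * Complex.I * (Real.pi / 3)))‖ = 1 := by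
  rw [exp_one]
  have h : Complex.ofReal (1/2) - Complex.ofReal (Real.sqrt 3/2) * Complex.I
      = Complex.ofReal (1/2) + Complex.ofReal (-(Real.sqrt 3/2)) * Complex.I := by push_cast; ring
  rw [h]; apply abs_of
  have := Real.sq_sqrt (by norm_num : (3:ℝ) ≥ 0)
  nlinarith [this]

lemma abs_exp_two : ‖(Complex.exp ((-1 : ℂ) ^ (2:ℕ) * Complex.I * (Real.pi / 3)))‖ = 1 := by
  rw [exp_two]; apply abs_of
  have := Real.sq_sqrt (by norm_num : (3:ℝ) ≥ 0)
  nlinarith [this]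

lemma abs_exp' (j : ℕ) (hj : j = 1 ∨ j = 2) :
    ‖(Complex.exp ((-1 : ℂ) ^ j * Complex.I * (Real.pi / 3)))‖ = 1 := by
  rcases hj with rfl | rfl
  · exact abs_exp_one
  · exact abs_exp_two


section Geom

variable {lam : ℝ}

/-- the radius of the invariant ball -/
noncomputable def R (lam : ℝ) : ℝ := (1 - lam)⁻¹

lemma R_pos (h1 : lam < 1/2) : 0 < R lam := by
  have : 0 < 1 - lam := by linarith
  exact inv_pos.mpr this

lemma one_le_R (h0 : 0 < lam) (h1 : lam < 1/2) : 1 ≤ R lam := by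
  have h2 : 0 < 1 - lam := by linarith
  rw [R]
  rw [le_inv_comm₀ one_pos h2]
  linarith

lemma lam_R_lt_one (h0 : 0 < lam) (h1 : lam < 1/2) : lam * R lam < 1 := by
  have h2 : 0 < 1 - lam := by linarith
  rw [R, mul_inv_lt_iff₀ h2]; linarith

lemma one_add_lam_R (h0 : 0 < lam) (h1 : lam < 1/2) : 1 + lam * R lam = R lam := by
  have h2 : (1 : ℝ) - lam ≠ 0 := by linarith
  rw [R]; field_simp; ring

/-- |Im z| is at most (√3/2)|z| inside the cone. -/
lemma im_le_of_cone {z : ℂ} (hc : |z.im| ≤ Real.sqrt 3 * z.re) :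
    2 * |z.im| ≤ Real.sqrt 3 * ‖z‖ := by
  have h3 : Real.sqrt 3 ^ 2 = 3 := Real.sq_sqrt (by norm_num)
  have h3p : 0 < Real.sqrt 3 := Real.sqrt_pos.mpr (by norm_num)
  have ha : ‖z‖ ^ 2 = z.re^2 + z.im^2 := by
    rw [Complex.sq_norm, Complex.normSq_apply]; ring
  have hre : 0 ≤ z.re := by nlinarith [abs_nonneg z.im]
  have h1 : (2 * |z.im|)^2 ≤ (Real.sqrt 3 * ‖z‖)^2 := by
    rw [mul_pow, mul_pow, h3, ha]
    nlinarith [_root_.sq_abs z.im, abs_nonneg z.im]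
  refine le_of_pow_le_pow_left₀ (n := 2) (by norm_num) ?_ h1
  positivity

lemma lam_im_lt (h0 : 0 < lam) (h1 : lam < 1/2) {z : ℂ}
    (hc : |z.im| ≤ Real.sqrt 3 * z.re) (hR : ‖z‖ ≤ R lam) :
    lam * |z.im| < Real.sqrt 3 / 2 := by
  have h2 := im_le_of_cone hc
  have h3p : 0 < Real.sqrt 3 := Real.sqrt_pos.mpr (by norm_num)
  have h4 := lam_R_lt_one h0 h1
  have h5 : lam * (2 * |z.im|) ≤ lam * (Real.sqrt 3 * ‖z‖) :=
    mul_le_mul_of_nonneg_left h2 h0.le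
  have h6 : lam * ‖z‖ < 1 := lt_of_le_of_lt (mul_le_mul_of_nonneg_left hR h0.le) h4
  have h7 : Real.sqrt 3 * (lam * ‖z‖) < Real.sqrt 3 * 1 :=
    mul_lt_mul_of_pos_left h6 h3p
  nlinarith

end Geom


section Geom2

variable {lam : ℝ}

def Good (lam : ℝ) (z : ℂ) : Prop :=
  ‖z‖ ≤ R lam ∧ |z.im| ≤ Real.sqrt 3 * z.re

lemma good_re_nonneg {z : ℂ} (h : Good lam z) : 0 ≤ z.re := by
  have h3p : 0 < Real.sqrt 3 := Real.sqrt_pos.mpr (by norm_num)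
  nlinarith [abs_nonneg z.im, h.2]

lemma abs_fmap_le (h0 : 0 < lam) (h1 : lam < 1/2) {z : ℂ} (j : ℕ) (hj : j = 1 ∨ j = 2)
    (hz : ‖z‖ ≤ R lam) : ‖(fmap lam j z)‖ ≤ R lam := by
  have he := abs_exp' j hj
  have : ‖(fmap lam j z)‖
      ≤ 1 + lam * ‖z‖ := by
    rw [fmap]
    refine le_trans (norm_add_le _ _) ?_
    rw [norm_one, norm_mul, norm_mul, he, Complex.norm_real, Real.norm_eq_abs, abs_of_pos h0, mul_one]
  refine le_trans this ?_
  rw [← one_add_lam_R h0 h1]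
  have := mul_le_mul_of_nonneg_left hz h0.le
  linarith

lemma cone_fmap_one (h0 : 0 < lam) (h1 : lam < 1/2) {z : ℂ} (hG : Good lam z) :
    |(fmap lam 1 z).im| < Real.sqrt 3 * (fmap lam 1 z).re := by
  have h3p : 0 < Real.sqrt 3 := Real.sqrt_pos.mpr (by norm_num)
  have h3 : Real.sqrt 3 ^ 2 = 3 := Real.sq_sqrt (by norm_num)
  have hre := good_re_nonneg hG
  have hl := lam_im_lt h0 h1 hG.2 hG.1
  have h4 : lam * (-|z.im|) ≤ lam * z.im := mul_le_mul_of_nonneg_left (neg_abs_le z.im) h0.le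
  have h5 : lam * z.im ≤ lam * |z.im| := mul_le_mul_of_nonneg_left (le_abs_self z.im) h0.le
  have h6 : 0 ≤ lam * z.re := mul_nonneg h0.le hre
  have h7 : 0 ≤ Real.sqrt 3 * (lam * z.re) := mul_nonneg h3p.le h6
  rw [fmap_one_re, fmap_one_im, abs_lt]
  constructor <;> nlinarith

lemma cone_fmap_two (h0 : 0 < lam) (h1 : lam < 1/2) {z : ℂ} (hG : Good lam z) :
    |(fmap lam 2 z).im| < Real.sqrt 3 * (fmap lam 2 z).re := by
  have h3p : 0 < Real.sqrt 3 := Real.sqrt_pos.mpr (by norm_num)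
  have h3 : Real.sqrt 3 ^ 2 = 3 := Real.sq_sqrt (by norm_num)
  have hre := good_re_nonneg hG
  have hl := lam_im_lt h0 h1 hG.2 hG.1
  have h4 : lam * (-|z.im|) ≤ lam * z.im := mul_le_mul_of_nonneg_left (neg_abs_le z.im) h0.le
  have h5 : lam * z.im ≤ lam * |z.im| := mul_le_mul_of_nonneg_left (le_abs_self z.im) h0.le
  have h6 : 0 ≤ lam * z.re := mul_nonneg h0.le hre
  have h7 : 0 ≤ Real.sqrt 3 * (lam * z.re) := mul_nonneg h3p.le h6
  rw [fmap_two_re, fmap_two_im, abs_lt]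
  constructor <;> nlinarith

lemma step (h0 : 0 < lam) (h1 : lam < 1/2) {z : ℂ} (j : ℕ) (hj : j = 1 ∨ j = 2)
    (hG : Good lam z) :
    Good lam (fmap lam j z) ∧ |(fmap lam j z).im| < Real.sqrt 3 * (fmap lam j z).re := by
  have hst : |(fmap lam j z).im| < Real.sqrt 3 * (fmap lam j z).re := by
    rcases hj with rfl | rfl
    · exact cone_fmap_one h0 h1 hG
    · exact cone_fmap_two h0 h1 hG
  exact ⟨⟨abs_fmap_le h0 h1 j hj hG.1, hst.le⟩, hst⟩

lemma seg_mem {z : ℂ} (hz : z ∈ segment ℝ (0:ℂ) 1) :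
    z.im = 0 ∧ 0 ≤ z.re ∧ z.re ≤ 1 := by
  rw [segment_eq_image] at hz
  obtain ⟨t, ht, rfl⟩ := hz
  simp only [smul_zero, sub_zero, smul_eq_mul, mul_one, zero_add]
  constructor
  · simp [Complex.real_smul]
  constructor
  · simp [Complex.real_smul]; exact ht.1
  · simp [Complex.real_smul]; exact ht.2

lemma good_word (h0 : 0 < lam) (h1 : lam < 1/2) :
    ∀ (w : List Bool) {z : ℂ}, z ∈ segment ℝ (0:ℂ) 1 →
      Good lam (fword lam w z) ∧ (w = [] → (fword lam w z).im = 0) ∧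
        (w ≠ [] → |(fword lam w z).im| < Real.sqrt 3 * (fword lam w z).re) := by
  intro w
  induction w with
  | nil =>
    intro z hz
    obtain ⟨him, hre0, hre1⟩ := seg_mem hz
    have habs : ‖z‖ ≤ 1 := by
      have : z = Complex.ofReal z.re := by
        apply Complex.ext <;> simp [him]
      rw [this, Complex.norm_real, Real.norm_eq_abs, _root_.abs_of_nonneg hre0]; exact hre1
    refine ⟨⟨le_trans habs (one_le_R h0 h1), ?_⟩, fun _ => him, fun h => absurd rfl h⟩
    show |z.im| ≤ Real.sqrt 3 * z.re
    rw [him, abs_zero]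
    have h3p : 0 < Real.sqrt 3 := Real.sqrt_pos.mpr (by norm_num)
    positivity
  | cons b w ih =>
    intro z hz
    obtain ⟨hG, _, _⟩ := ih hz
    have hj : (if b then 1 else 2 : ℕ) = 1 ∨ (if b then 1 else 2 : ℕ) = 2 := by
      cases b <;> simp
    have := step h0 h1 _ hj hG
    exact ⟨this.1, by simp, fun _ => this.2⟩

lemma vanish (h0 : 0 < lam) (h1 : lam < 1/2) (w : List Bool) {z : ℂ}
    (hz : z ∈ segment ℝ (0:ℂ) 1)
    (h : (fword lam w z).im = Real.sqrt 3 * (fword lam w z).re ∨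
         (fword lam w z).im = -(Real.sqrt 3 * (fword lam w z).re)) :
    fword lam w z = 0 := by
  obtain ⟨hG, hnil, hne⟩ := good_word h0 h1 w hz
  have h3p : 0 < Real.sqrt 3 := Real.sqrt_pos.mpr (by norm_num)
  have hre : 0 ≤ (fword lam w z).re := good_re_nonneg hG
  rcases eq_or_ne w [] with rfl | hw
  · have him := hnil rfl
    have : (fword lam [] z).re = 0 := by
      rcases h with h | h <;> nlinarith [him]
    exact Complex.ext this him
  · exfalso
    have hst := hne hw
    rcases h with h | h
    · rw [h, _root_.abs_of_nonneg (by positivity)] at hst; linarith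
    · rw [h, abs_neg, _root_.abs_of_nonneg (by positivity)] at hst; linarith

end Geom2

section Inter

variable {lam : ℝ}

/-- the segment of the word w -/
def Sset (lam : ℝ) (w : List Bool) : Set ℂ := fword lam w '' segment ℝ (0:ℂ) 1

lemma fmap_zero (j : ℕ) : fmap lam j 0 = 1 := by simp [fmap]

lemma sset_cons (b : Bool) (w : List Bool) :
    Sset lam (b :: w) = fmap lam (if b then 1 else 2) '' Sset lam w := by
  rw [Sset, Sset, fword, Set.image_comp]

lemma fmap_inj (h0 : 0 < lam) (j : ℕ) (hj : j = 1 ∨ j = 2) :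
    Function.Injective (fmap lam j) := by
  intro x y hxy
  rw [fmap, fmap] at hxy
  have hc : (lam : ℂ) * Complex.exp ((-1 : ℂ) ^ j * Complex.I * (Real.pi / 3)) ≠ 0 := by
    apply mul_ne_zero
    · simpa using h0.ne'
    · exact Complex.exp_ne_zero _
  exact mul_left_cancel₀ hc (add_left_cancel hxy)

lemma inter_base (h0 : 0 < lam) (h1 : lam < 1/2) (b : Bool) (u : List Bool) :
    segment ℝ (0:ℂ) 1 ∩ Sset lam (b :: u) ⊆ {1} := by
  rintro x ⟨hx1, z, hz, rfl⟩
  rw [fword] at *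
  set a := fword lam u z with ha
  have him : (fmap lam (if b then 1 else 2) a).im = 0 := (seg_mem hx1).1
  have h3p : 0 < Real.sqrt 3 := Real.sqrt_pos.mpr (by norm_num)
  have hvan : a = 0 := by
    apply vanish h0 h1 u hz
    cases b
    · simp only [Bool.false_eq_true, if_neg, ite_false] at him ⊢
      rw [fmap_two_im] at him
      right
      have : a.im/2 + Real.sqrt 3/2 * a.re = 0 := by
        rcases mul_eq_zero.mp him with h | h
        · exact absurd h h0.ne'
        · exact h
      linarith
    · simp only [ite_true] at him ⊢
      rw [fmap_one_im] at him
      left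
      have : a.im/2 - Real.sqrt 3/2 * a.re = 0 := by
        rcases mul_eq_zero.mp him with h | h
        · exact absurd h h0.ne'
        · exact h
      linarith
  show fmap lam (if b then 1 else 2) a = 1
  rw [hvan, fmap_zero]

end Inter

section Inter2

variable {lam : ℝ}

lemma inter_branch (h0 : 0 < lam) (h1 : lam < 1/2) (u u' : List Bool) :
    Sset lam (true :: u) ∩ Sset lam (false :: u') ⊆ {1} := by
  rintro x ⟨⟨z, hz, hxz⟩, ⟨z', hz', hxz'⟩⟩
  rw [fword] at hxz hxz'
  simp only [ite_true, Bool.false_eq_true, if_neg, ite_false, Function.comp_apply] at hxz hxz'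
  set a := fword lam u z with ha
  set a' := fword lam u' z' with ha'
  have hGa := (good_word h0 h1 u hz).1
  have hGa' := (good_word h0 h1 u' hz').1
  have h3p : 0 < Real.sqrt 3 := Real.sqrt_pos.mpr (by norm_num)
  -- x.im computed two ways
  have h1im : x.im = lam * (a.im/2 - Real.sqrt 3/2 * a.re) := by rw [← hxz, fmap_one_im]
  have h2im : x.im = lam * (a'.im/2 + Real.sqrt 3/2 * a'.re) := by rw [← hxz', fmap_two_im]
  have hua : a.im ≤ Real.sqrt 3 * a.re := le_trans (le_abs_self _) hGa.2
  have hub : -(Real.sqrt 3 * a'.re) ≤ a'.im := le_trans (neg_le_neg hGa'.2) (neg_abs_le _)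
  have hle : x.im ≤ 0 := by rw [h1im]; nlinarith
  have hge : 0 ≤ x.im := by rw [h2im]; nlinarith
  have hx0 : x.im = 0 := le_antisymm hle hge
  have hva : a = 0 := by
    apply vanish h0 h1 u hz
    left
    rw [hx0] at h1im
    have : a.im/2 - Real.sqrt 3/2 * a.re = 0 := by
      rcases mul_eq_zero.mp h1im.symm with h | h
      · exact absurd h h0.ne'
      · exact h
    linarith
  show x ∈ ({1} : Set ℂ)
  rw [← hxz, hva, fmap_zero]
  rfl

lemma sset_inter_subsingleton (h0 : 0 < lam) (h1 : lam < 1/2) :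
    ∀ w w' : List Bool, w ≠ w' → (Sset lam w ∩ Sset lam w').Subsingleton := by
  intro w
  induction w with
  | nil =>
    intro w' hne
    match w' with
    | [] => exact absurd rfl hne
    | b :: u =>
      rw [show Sset lam [] = segment ℝ (0:ℂ) 1 by simp [Sset, fword]]
      exact Set.subsingleton_singleton.anti (inter_base h0 h1 b u)
  | cons b u ih =>
    intro w' hne
    match w' with
    | [] =>
      rw [Set.inter_comm, show Sset lam [] = segment ℝ (0:ℂ) 1 by simp [Sset, fword]]
      exact Set.subsingleton_singleton.anti (inter_base h0 h1 b u)
    | b' :: u' =>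
      by_cases hb : b = b'
      · subst hb
        have hu : u ≠ u' := fun h => hne (by rw [h])
        rw [sset_cons, sset_cons, ← Set.image_inter (fmap_inj h0 _ (by cases b <;> simp))]
        exact (ih u' hu).image _
      · cases b <;> cases b' <;> try (exact absurd rfl hb) <;> try simp at hb
        · -- b = false, b' = true
          rw [Set.inter_comm]
          exact Set.subsingleton_singleton.anti (inter_branch h0 h1 u' u)
        · -- b = true, b' = false
          exact Set.subsingleton_singleton.anti (inter_branch h0 h1 u u')

end Inter2

open scoped ENNReal

section Meas

variable {lam : ℝ}

lemma seg01 : segment ℝ (0:ℂ) 1 = (fun t : ℝ => (t : ℂ)) '' Set.Icc 0 1 := by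
  rw [segment_eq_image]
  apply Set.image_congr
  intro t _
  simp [Complex.real_smul]

lemma fword_affine (h0 : 0 < lam) (w : List Bool) :
    ∃ b : ℂ, ‖b‖ = lam ^ w.length ∧ ∀ z, fword lam w z = fword lam w 0 + b * z := by
  induction w with
  | nil => exact ⟨1, by simp, fun z => by simp [fword]⟩
  | cons hd tl ih =>
    obtain ⟨b, hb, hf⟩ := ih
    set j := if hd then 1 else 2 with hj
    have hj' : j = 1 ∨ j = 2 := by cases hd <;> simp [hj]
    set c := (lam : ℂ) * Complex.exp ((-1 : ℂ) ^ j * Complex.I * (Real.pi / 3)) with hc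
    refine ⟨c * b, ?_, ?_⟩
    · rw [norm_mul, hc, norm_mul, abs_exp' j hj', Complex.norm_real, Real.norm_eq_abs, _root_.abs_of_pos h0, hb,
        List.length_cons, mul_one, pow_succ]
      ring
    · intro z
      have h1 : ∀ y, fmap lam j y = 1 + c * y := fun y => by rw [fmap, hc]
      show fmap lam j (fword lam tl z) = fmap lam j (fword lam tl 0) + c * b * z
      rw [h1, h1, hf z, hf 0]
      ring

lemma sset_is_segment (h0 : 0 < lam) (w : List Bool) :
    ∃ p q : ℂ, Sset lam w = segment ℝ p q ∧ dist p q = lam ^ w.length := by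
  obtain ⟨b, hb, hf⟩ := fword_affine h0 w
  refine ⟨fword lam w 0, fword lam w 0 + b, ?_, ?_⟩
  · rw [Sset, seg01, Set.image_image, segment_eq_image]
    apply Set.image_congr
    intro t _
    rw [hf]
    rw [Complex.real_smul, Complex.real_smul]
    push_cast
    ring
  · rw [Complex.dist_eq]
    simp [hb]

lemma meas_sset (h0 : 0 < lam) (w : List Bool) :
    μH[1] (Sset lam w) = ENNReal.ofReal lam ^ w.length := by
  obtain ⟨p, q, hseg, hd⟩ := sset_is_segment h0 w
  rw [hseg, hausdorffMeasure_segment, edist_dist, hd, ENNReal.ofReal_pow h0.le]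

lemma sset_compact (h0 : 0 < lam) (w : List Bool) : IsCompact (Sset lam w) := by
  obtain ⟨b, hb, hf⟩ := fword_affine h0 w
  rw [Sset, seg01, Set.image_image]
  apply isCompact_Icc.image
  have : Continuous (fword lam w) := by
    have h : fword lam w = fun z => fword lam w 0 + b * z := funext hf
    rw [h]
    exact continuous_const.add (continuous_const.mul continuous_id)
  exact this.comp Complex.continuous_ofReal

lemma tsum_fiber_const (n : ℕ) (c : ℝ≥0∞) :
    ∑' (_ : {w : List Bool // w.length = n}), c = 2 ^ n * c := by
  haveI : Fintype {w : List Bool // w.length = n} :=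
    Fintype.ofEquiv (Fin n → Bool) (Equiv.vectorEquivFin Bool n).symm
  rw [tsum_fintype, Finset.sum_const, Finset.card_univ]
  have hcard : Fintype.card {w : List Bool // w.length = n} = 2 ^ n := by
    have h2 : Fintype.card {w : List Bool // w.length = n} = Fintype.card (Fin n → Bool) :=
      Fintype.card_congr (Equiv.vectorEquivFin Bool n)
    rw [h2]
    simp
  rw [hcard, nsmul_eq_mul]
  push_cast
  ring

lemma tsum_words (q : ℝ≥0∞) : ∑' (w : List Bool), q ^ w.length = (1 - 2 * q)⁻¹ := by
  calc ∑' (w : List Bool), q ^ w.length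
      = ∑' (p : Σ n : ℕ, {w : List Bool // w.length = n}), q ^ ((Equiv.sigmaFiberEquiv (List.length : List Bool → ℕ)) p).length := by
        exact (Equiv.tsum_eq (Equiv.sigmaFiberEquiv (List.length : List Bool → ℕ)) _).symm
    _ = ∑' (n : ℕ), ∑' (w : {w : List Bool // w.length = n}), q ^ ((Equiv.sigmaFiberEquiv (List.length : List Bool → ℕ)) ⟨n, w⟩).length :=
        ENNReal.tsum_sigma' _
    _ = ∑' (n : ℕ), (2 : ℝ≥0∞) ^ n * q ^ n := by
        refine tsum_congr fun n => ?_
        rw [← tsum_fiber_const n (q ^ n)]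
        refine tsum_congr fun w => ?_
        have hw : ((Equiv.sigmaFiberEquiv (List.length : List Bool → ℕ)) ⟨n, w⟩).length = n := by
          rw [show ((Equiv.sigmaFiberEquiv (List.length : List Bool → ℕ)) ⟨n, w⟩ : List Bool) = w.1 from rfl, w.2]
        rw [hw]
    _ = ∑' (n : ℕ), (2 * q) ^ n := by simp [mul_pow]
    _ = (1 - 2 * q)⁻¹ := ENNReal.tsum_geometric _

end Meas

section Main

open Filter

variable {lam : ℝ}

lemma meas_union (h0 : 0 < lam) (h1 : lam < 1/2) :
    μH[1] (⋃ w : List Bool, fword lam w '' segment ℝ (0 : ℂ) 1)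
      = (1 - 2 * ENNReal.ofReal lam)⁻¹ := by
  haveI : NullSingletonClass (μH[1] : Measure ℂ) := Measure.noAtoms_hausdorff ℂ one_pos
  have h : (⋃ w : List Bool, fword lam w '' segment ℝ (0 : ℂ) 1) = ⋃ w : List Bool, Sset lam w :=
    rfl
  rw [h, measure_iUnion₀
    (fun w w' hne => ((sset_inter_subsingleton h0 h1 w w' hne).measure_zero _))
    (fun w => (sset_compact h0 w).isClosed.measurableSet.nullMeasurableSet)]
  rw [tsum_congr (fun w => meas_sset h0 w), tsum_words]

noncomputable def Kball (lam : ℝ) : Set ℂ := Metric.closedBall 0 (R lam)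

lemma mem_Kball {z : ℂ} : z ∈ Kball lam ↔ ‖z‖ ≤ R lam := by
  rw [Kball, Metric.mem_closedBall, Complex.dist_eq, sub_zero]

lemma seg_sub_K (h0 : 0 < lam) (h1 : lam < 1/2) : segment ℝ (0:ℂ) 1 ⊆ Kball lam := by
  intro z hz
  obtain ⟨him, hr0, hr1⟩ := seg_mem hz
  rw [mem_Kball]
  have hz' : z = Complex.ofReal z.re := by apply Complex.ext <;> simp [him]
  rw [hz', Complex.norm_real, Real.norm_eq_abs, _root_.abs_of_nonneg hr0]
  linarith [one_le_R h0 h1]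

lemma fword_maps_K (h0 : 0 < lam) (h1 : lam < 1/2) (w : List Bool) :
    Set.MapsTo (fword lam w) (Kball lam) (Kball lam) := by
  induction w with
  | nil => exact fun z hz => hz
  | cons b u ih =>
    intro z hz
    have h2 := ih hz
    rw [mem_Kball] at h2 ⊢
    exact abs_fmap_le h0 h1 _ (by cases b <;> simp) h2

lemma fword_append (w w' : List Bool) :
    fword lam (w ++ w') = fword lam w ∘ fword lam w' := by
  induction w with
  | nil => rfl
  | cons b u ih => simp [fword, ih, Function.comp_assoc]

lemma fword_cont (w : List Bool) : Continuous (fword lam w) := by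
  induction w with
  | nil => exact continuous_id
  | cons b u ih =>
    refine Continuous.comp ?_ ih
    rw [show fmap lam (if b then 1 else 2) = fun z => 1 +
      ((lam : ℂ) * Complex.exp ((-1 : ℂ) ^ (if b then 1 else 2 : ℕ) * Complex.I * (Real.pi / 3))) * z
      from funext fun z => by rw [fmap]]
    exact continuous_const.add (continuous_const.mul continuous_id)

lemma fmap_lip (h0 : 0 < lam) (j : ℕ) (hj : j = 1 ∨ j = 2) :
    LipschitzWith (Real.toNNReal lam) (fmap lam j) := by
  apply LipschitzWith.of_dist_le_mul
  intro x y
  rw [Complex.dist_eq, Complex.dist_eq]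
  have : fmap lam j x - fmap lam j y
      = ((lam : ℂ) * Complex.exp ((-1 : ℂ) ^ j * Complex.I * (Real.pi / 3))) * (x - y) := by
    rw [fmap, fmap]; ring
  rw [this, norm_mul, norm_mul, abs_exp' j hj, Complex.norm_real, Real.norm_eq_abs, _root_.abs_of_pos h0, mul_one,
    Real.coe_toNNReal _ h0.le]

lemma fword_lip (h0 : 0 < lam) (w : List Bool) :
    LipschitzWith (Real.toNNReal lam ^ w.length) (fword lam w) := by
  induction w with
  | nil => simpa [fword] using LipschitzWith.id
  | cons b u ih =>
    have := (fmap_lip h0 (if b then 1 else 2) (by cases b <;> simp)).comp ih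
    rw [List.length_cons, pow_succ]
    simpa [mul_comm, fword] using this

lemma ediam_K (h1 : lam < 1/2) :
    EMetric.diam (Kball lam) ≤ ENNReal.ofReal (2 * R lam) := by
  apply EMetric.diam_le
  intro x hx y hy
  rw [edist_dist]
  apply ENNReal.ofReal_le_ofReal
  rw [Kball, Metric.mem_closedBall] at hx hy
  calc dist x y ≤ dist x 0 + dist 0 y := dist_triangle _ _ _
    _ = dist x 0 + dist y 0 := by rw [dist_comm 0 y]
    _ ≤ 2 * R lam := by linarith

lemma diam_image (h0 : 0 < lam) (h1 : lam < 1/2) (w : List Bool) :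
    EMetric.diam (fword lam w '' Kball lam)
      ≤ ENNReal.ofReal (2 * R lam) * ENNReal.ofReal lam ^ w.length := by
  refine le_trans ((fword_lip h0 w).ediam_image_le _) ?_
  have hcoe : ((Real.toNNReal lam ^ w.length : NNReal) : ℝ≥0∞) = ENNReal.ofReal lam ^ w.length := by
    rw [ENNReal.coe_pow]; rfl
  rw [hcoe, mul_comm]
  exact mul_le_mul' (ediam_K h1) le_rfl

noncomputable def Tails (lam : ℝ) (N : ℕ) : Set ℂ :=
  ⋃ w : {w : List Bool // w.length = N}, fword lam w.1 '' Kball lam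

lemma tails_closed (N : ℕ) : IsClosed (Tails lam N) := by
  haveI : Fintype {w : List Bool // w.length = N} :=
    Fintype.ofEquiv (Fin N → Bool) (Equiv.vectorEquivFin Bool N).symm
  exact isClosed_iUnion_of_finite fun w =>
    (((isCompact_closedBall _ _).image (fword_cont w.1))).isClosed

lemma sigma_sub (h0 : 0 < lam) (h1 : lam < 1/2) :
    SigmaTree lam ⊆ (⋃ w : List Bool, Sset lam w) ∪ ⋂ N, Tails lam N := by
  intro x hx
  by_cases hU : x ∈ ⋃ w : List Bool, Sset lam w
  · exact Or.inl hU
  · refine Or.inr (Set.mem_iInter.mpr fun N => ?_)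
    set F : Set ℂ := ⋃ w : {w : List Bool // w.length ≤ N}, Sset lam w.1 with hF
    have hsub : (⋃ w : List Bool, Sset lam w) ⊆ F ∪ Tails lam N := by
      rintro y hy
      obtain ⟨w, hyw⟩ := Set.mem_iUnion.mp hy
      rcases le_or_gt w.length N with hlen | hlen
      · exact Or.inl (Set.mem_iUnion.mpr ⟨⟨w, hlen⟩, hyw⟩)
      · right
        obtain ⟨z, hz, rfl⟩ := hyw
        have hsplit : fword lam w z = fword lam (w.take N) (fword lam (w.drop N) z) := by
          conv_lhs => rw [← List.take_append_drop N w]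
          rw [fword_append]; rfl
        have hlenT : (w.take N).length = N := by
          rw [List.length_take]; exact min_eq_left hlen.le
        refine Set.mem_iUnion.mpr ⟨⟨w.take N, hlenT⟩, ?_⟩
        rw [hsplit]
        exact Set.mem_image_of_mem _ (fword_maps_K h0 h1 _ (seg_sub_K h0 h1 hz))
    have hFclosed : IsClosed F := by
      haveI : Finite {w : List Bool // w.length ≤ N} := by
        have := List.finite_length_le Bool N
        exact this.to_subtype
      exact isClosed_iUnion_of_finite fun w => (sset_compact h0 w.1).isClosed
    have hclosed : IsClosed (F ∪ Tails lam N) := hFclosed.union (tails_closed N)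
    have := closure_minimal hsub hclosed hx
    rcases this with hFx | hTx
    · exact absurd (Set.mem_iUnion.mpr ⟨_, (Set.mem_iUnion.mp hFx).choose_spec⟩) hU
    · exact hTx

lemma tails_inter_null (h0 : 0 < lam) (h1 : lam < 1/2) :
    μH[1] (⋂ N, Tails lam N) = 0 := by
  refine le_antisymm ?_ (zero_le)
  have hq1 : ENNReal.ofReal lam < 1 := ENNReal.ofReal_lt_one.mpr (by linarith)
  have h2q : (2 : ℝ≥0∞) * ENNReal.ofReal lam < 1 := by
    rw [show (2 : ℝ≥0∞) = ENNReal.ofReal 2 by simp]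
    rw [← ENNReal.ofReal_mul (by norm_num)]
    exact ENNReal.ofReal_lt_one.mpr (by linarith)
  have hle := Measure.hausdorffMeasure_le_liminf_tsum (d := 1) (⋂ N, Tails lam N)
      (l := atTop) (fun N => ENNReal.ofReal (2 * R lam) * ENNReal.ofReal lam ^ N)
      (by
        have hb := ENNReal.tendsto_pow_atTop_nhds_zero_of_lt_one hq1
        have := ENNReal.Tendsto.const_mul (a := ENNReal.ofReal (2 * R lam)) hb
          (Or.inr ENNReal.ofReal_ne_top)
        simpa using this)
      (fun N (w : {w : List Bool // w.length = N}) => fword lam w.1 '' Kball lam)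
      (Filter.Eventually.of_forall fun N w => by
        have := diam_image h0 h1 w.1
        rw [w.2] at this
        exact this)
      (Filter.Eventually.of_forall fun N => Set.iInter_subset _ N)
  refine le_trans hle ?_
  have hsum : ∀ N : ℕ,
      (∑' (w : {w : List Bool // w.length = N}),
        EMetric.diam (fword lam w.1 '' Kball lam) ^ (1 : ℝ))
      ≤ ENNReal.ofReal (2 * R lam) * (2 * ENNReal.ofReal lam) ^ N := by
    intro N
    calc (∑' (w : {w : List Bool // w.length = N}),
            EMetric.diam (fword lam w.1 '' Kball lam) ^ (1 : ℝ))
        = ∑' (w : {w : List Bool // w.length = N}),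
            EMetric.diam (fword lam w.1 '' Kball lam) := by
          refine tsum_congr fun w => ?_
          rw [ENNReal.rpow_one]
      _ ≤ ∑' (_ : {w : List Bool // w.length = N}),
            ENNReal.ofReal (2 * R lam) * ENNReal.ofReal lam ^ N :=
          ENNReal.tsum_le_tsum fun w => by
            have := diam_image h0 h1 w.1
            rw [w.2] at this
            exact this
      _ = 2 ^ N * (ENNReal.ofReal (2 * R lam) * ENNReal.ofReal lam ^ N) :=
          tsum_fiber_const N _
      _ = ENNReal.ofReal (2 * R lam) * (2 * ENNReal.ofReal lam) ^ N := by
          rw [mul_pow]; ring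
  refine le_trans (liminf_le_liminf (Filter.Eventually.of_forall hsum)) ?_
  have htend : Tendsto (fun N : ℕ => ENNReal.ofReal (2 * R lam) * (2 * ENNReal.ofReal lam) ^ N)
      atTop (nhds 0) := by
    have hb := ENNReal.tendsto_pow_atTop_nhds_zero_of_lt_one h2q
    have := ENNReal.Tendsto.const_mul (a := ENNReal.ofReal (2 * R lam)) hb
      (Or.inr ENNReal.ofReal_ne_top)
    simpa using this
  rw [htend.liminf_eq]

end Main

end STree

open scoped ENNReal

/-- For 0 < λ < 1/2, the self-similar tree Σ has total length ℋ¹(Σ) = 1/(1 − 2λ). -/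
theorem length_SigmaTree (lam : ℝ) (h0 : 0 < lam) (h1 : lam < 1 / 2) :
    μH[1] (SigmaTree lam) = ENNReal.ofReal (1 / (1 - 2 * lam)) := by
  have hU := STree.meas_union h0 h1
  have hmain : μH[1] (SigmaTree lam) = (1 - 2 * ENNReal.ofReal lam)⁻¹ := by
    refine le_antisymm ?_ ?_
    · calc μH[1] (SigmaTree lam)
          ≤ μH[1] ((⋃ w : List Bool, STree.Sset lam w) ∪ ⋂ N, STree.Tails lam N) :=
            measure_mono (STree.sigma_sub h0 h1)
        _ ≤ μH[1] (⋃ w : List Bool, STree.Sset lam w) + μH[1] (⋂ N, STree.Tails lam N) :=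
            measure_union_le _ _
        _ = (1 - 2 * ENNReal.ofReal lam)⁻¹ := by
            rw [STree.tails_inter_null h0 h1, add_zero]
            exact hU
    · rw [SigmaTree, ← hU]
      exact measure_mono subset_closure
  rw [hmain]
  have h2 : (2 : ℝ≥0∞) * ENNReal.ofReal lam = ENNReal.ofReal (2 * lam) := by
    rw [ENNReal.ofReal_mul (by norm_num : (0:ℝ) ≤ 2)]
    norm_num
  have h3 : ENNReal.ofReal (1 - 2 * lam) = 1 - ENNReal.ofReal (2 * lam) := by
    rw [ENNReal.ofReal_sub 1 (by linarith : (0:ℝ) ≤ 2 * lam), ENNReal.ofReal_one]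
  rw [h2, ← h3, ← ENNReal.ofReal_inv_of_pos (by linarith : (0:ℝ) < 1 - 2 * lam), one_div]
end

section
/- For 0 < λ < 1/25 and d ≤ 0 the following strict inequality holds: 1 − d + λ/2 − λ²/(2(1−λ²)) − λ³/(2(1−λ²)) + √3·λ − √3·λ³/(1−λ) > 1/(1−2λ) − d. -/
/-- Key numerical inequality: for 0 < λ < 1/25 and d ≤ 0,
1 − d + λ/2 − λ²/(2(1−λ²)) − λ³/(2(1−λ²)) + √3λ − √3λ³/(1−λ) > 1/(1−2λ) − d. -/
theorem key_inequality (lam d : ℝ) (h0 : 0 < lam) (h1 : lam < 1 / 25) (hd : d ≤ 0) :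
    1 - d + lam / 2 - lam ^ 2 / (2 * (1 - lam ^ 2)) - lam ^ 3 / (2 * (1 - lam ^ 2)) +
        Real.sqrt 3 * lam - Real.sqrt 3 * lam ^ 3 / (1 - lam)
      > 1 / (1 - 2 * lam) - d := by
  have hs : Real.sqrt 3 ≥ 1.732 := by
    rw [show (1.732 : ℝ) = Real.sqrt (1.732 ^ 2) by
      rw [Real.sqrt_sq]; norm_num]
    exact Real.sqrt_le_sqrt (by norm_num)
  have h2 : (0:ℝ) < 1 - lam := by linarith
  have h3 : (0:ℝ) < 1 - 2 * lam := by linarith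
  have h4 : (0:ℝ) < 1 - lam ^ 2 := by nlinarith
  set s := Real.sqrt 3 with hsdef
  set X : ℝ := 1 + lam / 2 - lam ^ 2 / (2 * (1 - lam ^ 2)) - lam ^ 3 / (2 * (1 - lam ^ 2)) +
      s * lam - s * lam ^ 3 / (1 - lam) - 1 / (1 - 2 * lam) with hX
  have hC : (0:ℝ) < 2 * (1 - lam ^ 2) * (1 - 2 * lam) := by positivity
  have hpoly : (0:ℝ) < 2 - 4 * lam - 4 * lam ^ 2 + 6 * lam ^ 3 + 4 * lam ^ 4 := by nlinarith
  have hQ : (0:ℝ) < lam * (-3 - 3 * lam + 4 * lam ^ 2 + 4 * lam ^ 3 +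
      s * (2 - 4 * lam - 4 * lam ^ 2 + 6 * lam ^ 3 + 4 * lam ^ 4)) := by
    have hsp : s * (2 - 4 * lam - 4 * lam ^ 2 + 6 * lam ^ 3 + 4 * lam ^ 4) ≥
        1.732 * (2 - 4 * lam - 4 * lam ^ 2 + 6 * lam ^ 3 + 4 * lam ^ 4) := by
      apply mul_le_mul_of_nonneg_right hs (le_of_lt hpoly)
    have hin : (0:ℝ) < -3 - 3 * lam + 4 * lam ^ 2 + 4 * lam ^ 3 +
        s * (2 - 4 * lam - 4 * lam ^ 2 + 6 * lam ^ 3 + 4 * lam ^ 4) := by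
      nlinarith [pow_pos h0 3, pow_pos h0 4, sq_nonneg lam]
    exact mul_pos h0 hin
  have eq : X * (2 * (1 - lam ^ 2) * (1 - 2 * lam)) =
      lam * (-3 - 3 * lam + 4 * lam ^ 2 + 4 * lam ^ 3 +
      s * (2 - 4 * lam - 4 * lam ^ 2 + 6 * lam ^ 3 + 4 * lam ^ 4)) := by
    rw [hX]
    field_simp
    ring_nf
    field_simp
    ring
  have hXpos : 0 < X := by
    by_contra h
    push_neg at h
    nlinarith [mul_nonpos_of_nonpos_of_nonneg h (le_of_lt hC)]
  rw [hX] at hXpos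
  linarith
end
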